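/- arXiv:2401.16207 — 5 statements merged into one kernel-verified Lean document; each statement's English description precedes it below -/
import Mathlib

section
/- As n → ∞, 2^n (3n−3)! / ((2n)! ((n−1)!)^3) is asymptotically equivalent to (√3/4) · (1/(π^{3/2} 3^3)) · 3^{3n} e^{2n} / (2^n n^{2n+3/2}). -/
open Filter

open Real Stirling
private lemma fact_eq (n : ℕ) (hn : 1 ≤ n) :
    (Nat.factorial n : ℝ) = stirlingSeq n * (Real.sqrt (2*n) * ((n : ℝ)/Real.exp 1)^n) := by
  rw [stirlingSeq]
  have h1 : (0:ℝ) < n := by exact_mod_cast hn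
  have : Real.sqrt (2*n) * ((n : ℝ)/Real.exp 1)^n ≠ 0 := by positivity
  field_simp

private lemma sSeq_pos (n : ℕ) (hn : 1 ≤ n) : 0 < stirlingSeq n := by
  obtain ⟨k, rfl⟩ : ∃ k, n = k + 1 := ⟨n - 1, by omega⟩
  exact stirlingSeq'_pos k

private lemma key_eq (m : ℕ) (hm : 1 ≤ m) :
    ((2 : ℝ) ^ (m+1) * (Nat.factorial (3 * (m+1) - 3)) /
        ((Nat.factorial (2 * (m+1))) * ((Nat.factorial ((m+1) - 1)) : ℝ) ^ 3)) /
      ((Real.sqrt 3 / 4) * (1 / (Real.pi ^ ((3 : ℝ) / 2) * 3 ^ 3)) *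
        ((3 : ℝ) ^ (3 * (m+1)) * Real.exp 1 ^ (2 * (m+1)) /
          ((2 : ℝ) ^ (m+1) * ((m+1 : ℕ) : ℝ) ^ (2 * ((m+1 : ℕ) : ℝ) + 3 / 2))))
    = Real.pi ^ ((3:ℝ)/2) * stirlingSeq (3*m) /
      (stirlingSeq (2*m+2) * stirlingSeq m ^ 3) * (((m:ℝ)+1)/m) := by
  have e1 : 3 * (m+1) - 3 = 3 * m := by omega
  have e2 : 2 * (m+1) = 2 * m + 2 := by omega
  have e3 : (m+1) - 1 = m := by omega
  rw [e1, e2, e3]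
  have hm0 : (0:ℝ) < m := by exact_mod_cast hm
  have hm1 : (0:ℝ) < (m:ℝ) + 1 := by positivity
  -- rpow handling
  have hrpow : ((m+1 : ℕ) : ℝ) ^ (2 * ((m+1 : ℕ) : ℝ) + 3 / 2) =
      ((m:ℝ)+1) ^ (2*m+2) * (((m:ℝ)+1) * Real.sqrt ((m:ℝ)+1)) := by
    push_cast
    have h : 2 * ((m:ℝ)+1) + 3/2 = ((2*m+3 : ℕ) : ℝ) + 1/2 := by push_cast; ring
    rw [h, Real.rpow_add hm1, Real.rpow_natCast, ← Real.sqrt_eq_rpow]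
    push_cast
    ring_nf
  rw [hrpow]
  rw [fact_eq (3*m) (by omega), fact_eq (2*m+2) (by omega), fact_eq m hm]
  have hcast3 : ((3*m : ℕ) : ℝ) = 3 * m := by push_cast; ring
  have hcast2 : ((2*m+2 : ℕ) : ℝ) = 2*((m:ℝ)+1) := by push_cast; ring
  rw [hcast3, hcast2]
  have h6 : Real.sqrt (2*(3*(m:ℝ))) = Real.sqrt 3 * Real.sqrt (2*m) := by
    rw [show (2:ℝ)*(3*m) = 3*(2*m) by ring, Real.sqrt_mul (by norm_num)]
  have h4 : Real.sqrt (2*(2*((m:ℝ)+1))) = 2 * Real.sqrt ((m:ℝ)+1) := by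
    rw [show (2:ℝ)*(2*((m:ℝ)+1)) = 4*((m:ℝ)+1) by ring, Real.sqrt_mul (by norm_num),
        show (4:ℝ) = 2^2 by norm_num, Real.sqrt_sq (by norm_num)]
  have ht3 : (Real.sqrt (2*(m:ℝ)))^3 = (2*m) * Real.sqrt (2*(m:ℝ)) := by
    rw [pow_succ, Real.sq_sqrt (by positivity)]
  rw [h6, h4]
  have hs3 := sSeq_pos (3*m) (by omega)
  have hs2 := sSeq_pos (2*m+2) (by omega)
  have hs1 := sSeq_pos m hm
  have hsq2m : (0:ℝ) < Real.sqrt (2*m) := Real.sqrt_pos.2 (by positivity)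
  have hsqm1 : (0:ℝ) < Real.sqrt ((m:ℝ)+1) := Real.sqrt_pos.2 (by positivity)
  have hsq3 : (0:ℝ) < Real.sqrt 3 := Real.sqrt_pos.2 (by norm_num)
  have hexp : (0:ℝ) < Real.exp 1 := Real.exp_pos 1
  have hpi : (0:ℝ) < Real.pi ^ ((3:ℝ)/2) := by positivity
  simp only [div_pow, mul_pow, ← pow_mul]
  rw [ht3]
  field_simp
  ring

private lemma tendsto_g :
    Tendsto (fun m : ℕ => Real.pi ^ ((3:ℝ)/2) * stirlingSeq (3*m) /
      (stirlingSeq (2*m+2) * stirlingSeq m ^ 3) * (((m:ℝ)+1)/m)) atTop (nhds 1) := by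
  have hs := tendsto_stirlingSeq_sqrt_pi
  have h3 : Tendsto (fun m : ℕ => stirlingSeq (3*m)) atTop (nhds (Real.sqrt π)) :=
    hs.comp (tendsto_atTop_atTop_of_monotone (fun a b h => by omega) (fun b => ⟨b, by omega⟩))
  have h2 : Tendsto (fun m : ℕ => stirlingSeq (2*m+2)) atTop (nhds (Real.sqrt π)) :=
    hs.comp (tendsto_atTop_atTop_of_monotone (fun a b h => by omega) (fun b => ⟨b, by omega⟩))
  have hq : Tendsto (fun m : ℕ => ((m:ℝ)+1)/m) atTop (nhds 1) := by
    have h := tendsto_one_div_atTop_nhds_zero_nat (𝕜 := ℝ)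
    have := (tendsto_const_nhds (x := (1:ℝ)) (f := atTop)).add h
    rw [add_zero] at this
    refine this.congr' ?_
    filter_upwards [eventually_ge_atTop 1] with m hm
    have : (m:ℝ) ≠ 0 := by positivity
    field_simp
  have key : Tendsto (fun m : ℕ => Real.pi ^ ((3:ℝ)/2) * stirlingSeq (3*m) /
      (stirlingSeq (2*m+2) * stirlingSeq m ^ 3)) atTop
      (nhds (Real.pi ^ ((3:ℝ)/2) * Real.sqrt π / (Real.sqrt π * Real.sqrt π ^ 3))) := by
    exact ((tendsto_const_nhds.mul h3).div (h2.mul (hs.pow 3)) (by positivity))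
  have hval : Real.pi ^ ((3:ℝ)/2) * Real.sqrt π / (Real.sqrt π * Real.sqrt π ^ 3) = 1 := by
    rw [Real.sqrt_eq_rpow, ← Real.rpow_natCast (π ^ ((1:ℝ)/2)) 3, ← Real.rpow_mul pi_pos.le,
        ← Real.rpow_add pi_pos, ← Real.rpow_add pi_pos]
    norm_num
  rw [hval] at key
  simpa using key.mul hq



/-- Asymptotics of Valtr's triangle formula:
`2^n (3n-3)!/((2n)!((n-1)!)^3) ~ (√3/4)·(1/(π^{3/2} 3^3))·3^{3n} e^{2n}/(2^n n^{2n+3/2})`. -/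
theorem valtr_triangle_asymptotics :
    Tendsto (fun n : ℕ =>
      ((2 : ℝ) ^ n * (Nat.factorial (3 * n - 3)) /
        ((Nat.factorial (2 * n)) * ((Nat.factorial (n - 1)) : ℝ) ^ 3)) /
      ((Real.sqrt 3 / 4) * (1 / (Real.pi ^ ((3 : ℝ) / 2) * 3 ^ 3)) *
        ((3 : ℝ) ^ (3 * n) * Real.exp 1 ^ (2 * n) /
          ((2 : ℝ) ^ n * (n : ℝ) ^ (2 * (n : ℝ) + 3 / 2)))))
      atTop (nhds 1) := by
  rw [← Filter.tendsto_add_atTop_iff_nat 1]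
  refine Filter.Tendsto.congr' ?_ tendsto_g
  filter_upwards [Filter.eventually_ge_atTop 1] with m hm
  exact (key_eq m hm).symm
end

section
/- The sum over all quadruples (h,i,j,k) of nonnegative integers with h+i+j+k = n and h+i ≥ 1, i+j ≥ 1, j+k ≥ 1, k+h ≥ 1 of the product 1/(h!(h+i−1)!) · 1/(i!(i+j−1)!) · 1/(j!(j+k−1)!) · 1/(k!(h+k−1)!) equals (1/(n!((n−2)!)^2)) · C(2n−2, n−1)^2, for all n ≥ 3. -/
open Nat Finset

/-- Vandermonde over a range. -/
lemma vand (p q m : ℕ) : ∑ x ∈ range (m+1), p.choose x * q.choose (m - x) = (p+q).choose m := by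
  rw [Nat.add_choose_eq, Finset.Nat.sum_antidiagonal_eq_sum_range_succ_mk]

/-- shifted Vandermonde -/
lemma sv2 (c r m : ℕ) : ∑ y ∈ range (c+1), c.choose y * r.choose (m + y) = (c+r).choose (c+m) := by
  rw [← vand c r (c+m)]
  rw [← Finset.sum_subset (Finset.range_subset_range.2 (by omega : c+1 ≤ c+m+1))
    (fun x _ hx => by
      have : c < x := by simpa using hx
      simp [Nat.choose_eq_zero_of_lt this])]
  rw [← Finset.sum_range_reflect (fun y => c.choose y * r.choose (m + y)) (c+1)]
  refine Finset.sum_congr rfl fun x hx => ?_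
  have hx' : x ≤ c := by simpa [Nat.lt_succ_iff] using hx
  have e : c + 1 - 1 - x = c - x := by omega
  rw [e, Nat.choose_symm hx']
  congr 2
  omega

/-- single shifted Vandermonde with the `y ≥ 1` condition. -/
lemma sv (q r : ℕ) (hq : 1 ≤ q) :
    ∑ y ∈ range (q+1), (if 1 ≤ y then q.choose y * r.choose (y-1) else 0)
      = (q+r).choose (q-1) := by
  rw [Finset.sum_range_succ' (fun y => if 1 ≤ y then q.choose y * r.choose (y-1) else 0) q]
  simp only [Nat.add_sub_cancel, if_pos (Nat.succ_le_succ (Nat.zero_le _)),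
    if_neg (by norm_num : ¬(1:ℕ) ≤ 0), add_zero]
  rw [← vand q r (q-1)]
  have hq1 : q - 1 + 1 = q := by omega
  rw [hq1, ← Finset.sum_range_reflect (fun y => q.choose (y+1) * r.choose y) q]
  refine Finset.sum_congr rfl fun x hx => ?_
  have hx' : x < q := by simpa using hx
  have h1 : q - 1 - x + 1 = q - x := by omega
  rw [h1, Nat.choose_symm (by omega)]

/-- double shifted Vandermonde -/
lemma dv (p q r : ℕ) (hq : 1 ≤ q) :
    ∑ x ∈ range (p+1), ∑ y ∈ range (q+1),
      p.choose x * (if 1 ≤ x + y then q.choose y * r.choose (x+y-1) else 0)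
    = (p+q+r).choose (p+q-1) := by
  have inner : ∀ x, ∑ y ∈ range (q+1), (if 1 ≤ x + y then q.choose y * r.choose (x+y-1) else 0)
      = (q+r).choose (q-1+x) := by
    intro x
    rcases Nat.eq_zero_or_pos x with rfl | hx
    · simpa using sv q r hq
    · have h : ∀ y, (if 1 ≤ x + y then q.choose y * r.choose (x+y-1) else 0)
          = q.choose y * r.choose ((x-1) + y) := by
        intro y; rw [if_pos (by omega)]; congr 2; omega
      rw [Finset.sum_congr rfl (fun y _ => h y), sv2]
      congr 1; omega
  calc ∑ x ∈ range (p+1), ∑ y ∈ range (q+1),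
        p.choose x * (if 1 ≤ x + y then q.choose y * r.choose (x+y-1) else 0)
      = ∑ x ∈ range (p+1), p.choose x * (q+r).choose ((q-1)+x) := by
        refine Finset.sum_congr rfl fun x _ => ?_
        rw [← Finset.mul_sum, inner x]
    _ = (p+(q+r)).choose (p+(q-1)) := sv2 p (q+r) (q-1)
    _ = (p+q+r).choose (p+q-1) := by congr 1 <;> omega

lemma collapse (n m : ℕ) (P : Prop) [Decidable P] (T : ℕ) :
    ∑ k ∈ range (n+1), (if m + k = n ∧ P then T else 0) = if m ≤ n ∧ P then T else 0 := by
  rcases le_or_gt m n with hm | hm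
  · rw [Finset.sum_eq_single (n - m)]
    · have e : m + (n - m) = n := by omega
      simp [e, hm]
    · intro k _ hne
      rw [if_neg]
      rintro ⟨e, -⟩
      exact hne (by omega)
    · intro hmem
      exact absurd (by simp) hmem
  · rw [if_neg (by omega)]
    exact Finset.sum_eq_zero fun k _ => if_neg (by rintro ⟨e, -⟩; omega)

lemma shift_sum {M : Type*} [AddCommMonoid M] (h n : ℕ) (hh : h ≤ n) (g : ℕ → M)
    (h0 : ∀ a, a < h → g a = 0) (h1 : ∀ a, n < a → g a = 0) :
    ∑ i ∈ range (n+1), g (h+i) = ∑ a ∈ range (n+1), g a := by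
  have L : ∑ i ∈ range (n+1), g (h+i) = ∑ a ∈ Finset.Ico h (h+(n+1)), g a := by
    rw [Finset.sum_Ico_eq_sum_range]
    have e : h + (n+1) - h = n + 1 := by omega
    rw [e]
  rw [L]
  have A : ∑ a ∈ Finset.Ico h (h+(n+1)), g a = ∑ a ∈ Finset.Ico h (n+1), g a := by
    refine (Finset.sum_subset (Finset.Ico_subset_Ico le_rfl (by omega)) ?_).symm
    intro a ha hna
    refine h1 a ?_
    simp only [Finset.mem_Ico] at ha hna
    omega
  have B : ∑ a ∈ range (n+1), g a = ∑ a ∈ Finset.Ico h (n+1), g a := by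
    refine (Finset.sum_subset (fun a ha => ?_) ?_).symm
    · simp only [Finset.mem_Ico] at ha; simp; omega
    · intro a ha hna
      refine h0 a ?_
      simp only [Finset.mem_range] at ha
      simp only [Finset.mem_Ico] at hna
      omega
  rw [A, B]

lemma key (n : ℕ) (hn : 3 ≤ n) :
    ∑ h ∈ range (n+1), ∑ i ∈ range (n+1), ∑ j ∈ range (n+1), ∑ k ∈ range (n+1),
      (if h + i + j + k = n ∧ 1 ≤ h + i ∧ 1 ≤ i + j ∧ 1 ≤ j + k ∧ 1 ≤ k + h then
        n.choose (h+i) * (h+i).choose h * ((n-(h+i)).choose j *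
          ((n-2).choose (h+i-1) * (n-2).choose (i+j-1)))
      else 0)
    = ((2*n-2).choose (n-1))^2 := by
  -- Step 1: drop the two redundant conditions, and collapse the k-sum
  have step12 : ∀ h i j : ℕ,
      (∑ k ∈ range (n+1),
        if h + i + j + k = n ∧ 1 ≤ h + i ∧ 1 ≤ i + j ∧ 1 ≤ j + k ∧ 1 ≤ k + h then
          n.choose (h+i) * (h+i).choose h * ((n-(h+i)).choose j *
            ((n-2).choose (h+i-1) * (n-2).choose (i+j-1)))
        else 0)
      = if h + i + j ≤ n ∧ 1 ≤ h + i ∧ 1 ≤ i + j then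
          n.choose (h+i) * (h+i).choose h * ((n-(h+i)).choose j *
            ((n-2).choose (h+i-1) * (n-2).choose (i+j-1)))
        else 0 := by
    intro h i j
    rw [← collapse n (h+i+j) (1 ≤ h + i ∧ 1 ≤ i + j)]
    refine Finset.sum_congr rfl fun k _ => ?_
    split_ifs with h1 h2
    · rfl
    · omega
    · rcases (by omega : h + i = n ∨ i + j = n) with e | e
      · have hz : (n-2).choose (h+i-1) = 0 := Nat.choose_eq_zero_of_lt (by omega)
        simp [hz]
      · have hz : (n-2).choose (i+j-1) = 0 := Nat.choose_eq_zero_of_lt (by omega)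
        simp [hz]
    · rfl
  simp only [step12]
  -- Step 3: reindex (h,i) ↦ (a = h+i, h)
  have step3 : ∀ h ∈ range (n+1),
      (∑ i ∈ range (n+1), ∑ j ∈ range (n+1),
        if h + i + j ≤ n ∧ 1 ≤ h + i ∧ 1 ≤ i + j then
          n.choose (h+i) * (h+i).choose h * ((n-(h+i)).choose j *
            ((n-2).choose (h+i-1) * (n-2).choose (i+j-1)))
        else 0)
      = ∑ a ∈ range (n+1), ∑ j ∈ range (n+1),
          (if a + j ≤ n ∧ 1 ≤ a ∧ 1 ≤ (a-h) + j then
            n.choose a * a.choose h * ((n-a).choose j *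
              ((n-2).choose (a-1) * (n-2).choose ((a-h)+j-1)))
          else 0) := by
    intro h hh
    simp only [Finset.mem_range] at hh
    rw [← shift_sum h n (by omega)
      (fun a => ∑ j ∈ range (n+1),
        if a + j ≤ n ∧ 1 ≤ a ∧ 1 ≤ (a-h) + j then
          n.choose a * a.choose h * ((n-a).choose j *
            ((n-2).choose (a-1) * (n-2).choose ((a-h)+j-1)))
        else 0)
      (fun a ha => Finset.sum_eq_zero fun j _ => by
        have hz : a.choose h = 0 := Nat.choose_eq_zero_of_lt ha
        simp [hz])
      (fun a ha => Finset.sum_eq_zero fun j _ => by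
        rw [if_neg (by omega)])]
    refine Finset.sum_congr rfl fun i _ => Finset.sum_congr rfl fun j _ => ?_
    simp only [show h + i - h = i from by omega]
  rw [Finset.sum_congr rfl step3, Finset.sum_comm]
  -- Step 4: for each a, the inner double sum is Vandermonde
  have step4 : ∀ a ∈ range (n+1),
      (∑ h ∈ range (n+1), ∑ j ∈ range (n+1),
        if a + j ≤ n ∧ 1 ≤ a ∧ 1 ≤ (a-h) + j then
          n.choose a * a.choose h * ((n-a).choose j *
            ((n-2).choose (a-1) * (n-2).choose ((a-h)+j-1)))
        else 0)
      = (if 1 ≤ a then n.choose a * (n-2).choose (a-1) else 0) * (2*n-2).choose (n-1) := by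
    intro a ha
    simp only [Finset.mem_range] at ha
    rcases Nat.eq_zero_or_pos a with rfl | ha1
    · rw [if_neg (by omega), zero_mul]
      exact Finset.sum_eq_zero fun h _ => Finset.sum_eq_zero fun j _ => if_neg (by omega)
    by_cases han : a < n
    case neg =>
      have hz : (n-2).choose (a-1) = 0 := Nat.choose_eq_zero_of_lt (by omega)
      rw [if_pos (show 1 ≤ a by omega), hz, mul_zero, zero_mul]
      refine Finset.sum_eq_zero fun h _ => Finset.sum_eq_zero fun j _ => ?_
      split_ifs with hc
      · simp [hz]
      · rfl
    -- main case : 1 ≤ a ≤ n-1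
    have hna : 1 ≤ n - a := by omega
    -- (i) factor out constants
    have ti : ∀ h j : ℕ,
        (if a + j ≤ n ∧ 1 ≤ a ∧ 1 ≤ (a-h) + j then
          n.choose a * a.choose h * ((n-a).choose j *
            ((n-2).choose (a-1) * (n-2).choose ((a-h)+j-1)))
        else 0)
        = n.choose a * (n-2).choose (a-1) *
            (a.choose h * (if 1 ≤ (a-h) + j then
              (n-a).choose j * (n-2).choose ((a-h)+j-1) else 0)) := by
      intro h j
      split_ifs with h1 h2
      · ring
      · omega
      · have hz : (n-a).choose j = 0 := Nat.choose_eq_zero_of_lt (by omega)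
        simp [hz]
      · simp
    simp only [ti, ← Finset.mul_sum]
    rw [if_pos (show 1 ≤ a by omega)]
    congr 1
    -- (iii) truncate the j-range
    have tj : ∀ m : ℕ,
        (∑ j ∈ range (n+1), if 1 ≤ m + j then
            (n-a).choose j * (n-2).choose (m+j-1) else 0)
        = ∑ j ∈ range ((n-a)+1), if 1 ≤ m + j then
            (n-a).choose j * (n-2).choose (m+j-1) else 0 := by
      intro m
      refine (Finset.sum_subset (Finset.range_subset_range.2 (by omega)) ?_).symm
      intro j _ hj
      have hz : (n-a).choose j = 0 := Nat.choose_eq_zero_of_lt (by simp at hj; omega)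
      simp [hz]
    simp only [tj]
    -- (iv) truncate the h-range
    have th : (∑ h ∈ range (n+1), a.choose h * ∑ j ∈ range ((n-a)+1),
          (if 1 ≤ (a-h) + j then
            (n-a).choose j * (n-2).choose ((a-h)+j-1) else 0))
        = ∑ h ∈ range (a+1), a.choose h * ∑ j ∈ range ((n-a)+1),
          (if 1 ≤ (a-h) + j then
            (n-a).choose j * (n-2).choose ((a-h)+j-1) else 0) := by
      refine (Finset.sum_subset (Finset.range_subset_range.2 (by omega)) ?_).symm
      intro h _ hh
      have hz : a.choose h = 0 := Nat.choose_eq_zero_of_lt (by simp at hh; omega)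
      simp [hz]
    rw [th]
    -- hreflect h ↦ a - h, then apply dv
    have hrefl := Finset.sum_range_reflect
      (fun x => a.choose x * ∑ j ∈ range ((n-a)+1), (if 1 ≤ x + j then
        (n-a).choose j * (n-2).choose (x+j-1) else 0)) (a+1)
    simp only [Nat.add_sub_cancel] at hrefl
    have lhs_eq : (∑ h ∈ range (a+1), a.choose h * ∑ j ∈ range ((n-a)+1),
          (if 1 ≤ (a-h) + j then
            (n-a).choose j * (n-2).choose ((a-h)+j-1) else 0))
        = ∑ h ∈ range (a+1), a.choose (a-h) * ∑ j ∈ range ((n-a)+1),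
          (if 1 ≤ (a-h) + j then
            (n-a).choose j * (n-2).choose ((a-h)+j-1) else 0) := by
      refine Finset.sum_congr rfl fun h hh => ?_
      simp only [Finset.mem_range] at hh
      rw [← Nat.choose_symm (show h ≤ a by omega)]
    rw [lhs_eq, hrefl]
    simp only [Finset.mul_sum]
    rw [dv a (n-a) (n-2) hna]
    congr 1 <;> omega
  rw [Finset.sum_congr rfl step4, ← Finset.sum_mul]
  rw [sv n (n-2) (by omega)]
  rw [sq, show n + (n-2) = 2*n-2 from by omega]


lemma term_eq (n h i j k : ℕ) (hn : 3 ≤ n) (hsum : h+i+j+k = n) (c1 : 1 ≤ h+i)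
    (c2 : 1 ≤ i+j) (c3 : 1 ≤ j+k) (c4 : 1 ≤ k+h) :
    (1 : ℝ) / (h ! * (h + i - 1)!) * (1 / (i ! * (i + j - 1)!)) *
      (1 / (j ! * (j + k - 1)!)) * (1 / (k ! * (h + k - 1)!))
    = (1 / ((n ! : ℝ) * ((n - 2)! : ℝ) ^ 2)) *
        ((n.choose (h+i) * (h+i).choose h * ((n-(h+i)).choose j *
          ((n-2).choose (h+i-1) * (n-2).choose (i+j-1))) : ℕ) : ℝ) := by
  have natid : (n.choose (h+i) * (h+i).choose h * ((n-(h+i)).choose j *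
      ((n-2).choose (h+i-1) * (n-2).choose (i+j-1)))) *
      ((h ! * (h+i-1)!) * (i ! * (i+j-1)!) * (j ! * (j+k-1)!) * (k ! * (h+k-1)!))
      = n ! * (n-2)! ^ 2 := by
    have e1 : (h+i).choose h * h ! * i ! = (h+i)! := by
      have t := Nat.choose_mul_factorial_mul_factorial (show h ≤ h+i by omega)
      rwa [show h+i-h = i from by omega] at t
    have e2 : (n-(h+i)).choose j * j ! * k ! = (n-(h+i))! := by
      have t := Nat.choose_mul_factorial_mul_factorial (show j ≤ n-(h+i) by omega)
      rwa [show n-(h+i)-j = k from by omega] at t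
    have e3 : n.choose (h+i) * (h+i)! * (n-(h+i))! = n ! :=
      Nat.choose_mul_factorial_mul_factorial (by omega)
    have e4 : (n-2).choose (h+i-1) * (h+i-1)! * (j+k-1)! = (n-2)! := by
      have t := Nat.choose_mul_factorial_mul_factorial (show h+i-1 ≤ n-2 by omega)
      rwa [show n-2-(h+i-1) = j+k-1 from by omega] at t
    have e5 : (n-2).choose (i+j-1) * (i+j-1)! * (h+k-1)! = (n-2)! := by
      have t := Nat.choose_mul_factorial_mul_factorial (show i+j-1 ≤ n-2 by omega)
      rwa [show n-2-(i+j-1) = h+k-1 from by omega] at t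
    rw [← e3, ← e1, ← e2, sq]
    nth_rewrite 1 [← e4]
    nth_rewrite 1 [← e5]
    ring
  have hfac : ∀ m : ℕ, ((m ! : ℕ) : ℝ) ≠ 0 := fun m =>
    Nat.cast_ne_zero.2 (Nat.factorial_ne_zero m)
  have hcast := congrArg (Nat.cast : ℕ → ℝ) natid
  push_cast at hcast
  field_simp
  push_cast
  linear_combination -hcast

/-- The combinatorial identity for the square case: summing over all size-vectors
`(h,i,j,k)` with `h+i+j+k = n` and `h+i, i+j, j+k, k+h ≥ 1`,
`∑ 1/(h!(h+i-1)!) · 1/(i!(i+j-1)!) · 1/(j!(j+k-1)!) · 1/(k!(h+k-1)!)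
  = (1/(n!((n-2)!)^2)) · C(2n-2,n-1)^2`. -/
theorem sum_quadruples_eq (n : ℕ) (hn : 3 ≤ n) :
    (∑ h ∈ Finset.range (n + 1), ∑ i ∈ Finset.range (n + 1),
      ∑ j ∈ Finset.range (n + 1), ∑ k ∈ Finset.range (n + 1),
        if h + i + j + k = n ∧ 1 ≤ h + i ∧ 1 ≤ i + j ∧ 1 ≤ j + k ∧ 1 ≤ k + h then
          (1 : ℝ) / (h ! * (h + i - 1)!) * (1 / (i ! * (i + j - 1)!)) *
            (1 / (j ! * (j + k - 1)!)) * (1 / (k ! * (h + k - 1)!))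
        else 0) =
      (1 / ((n ! : ℝ) * ((n - 2)! : ℝ) ^ 2)) * ((2 * n - 2).choose (n - 1) : ℝ) ^ 2 := by
  calc (∑ h ∈ Finset.range (n + 1), ∑ i ∈ Finset.range (n + 1),
      ∑ j ∈ Finset.range (n + 1), ∑ k ∈ Finset.range (n + 1),
        if h + i + j + k = n ∧ 1 ≤ h + i ∧ 1 ≤ i + j ∧ 1 ≤ j + k ∧ 1 ≤ k + h then
          (1 : ℝ) / (h ! * (h + i - 1)!) * (1 / (i ! * (i + j - 1)!)) *
            (1 / (j ! * (j + k - 1)!)) * (1 / (k ! * (h + k - 1)!))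
        else 0)
      = ∑ h ∈ Finset.range (n + 1), ∑ i ∈ Finset.range (n + 1),
          ∑ j ∈ Finset.range (n + 1), ∑ k ∈ Finset.range (n + 1),
          (1 / ((n ! : ℝ) * ((n - 2)! : ℝ) ^ 2)) *
            (((if h + i + j + k = n ∧ 1 ≤ h + i ∧ 1 ≤ i + j ∧ 1 ≤ j + k ∧ 1 ≤ k + h then
              n.choose (h+i) * (h+i).choose h * ((n-(h+i)).choose j *
                ((n-2).choose (h+i-1) * (n-2).choose (i+j-1)))
            else 0 : ℕ)) : ℝ) := by
        refine Finset.sum_congr rfl fun h _ => Finset.sum_congr rfl fun i _ =>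
          Finset.sum_congr rfl fun j _ => Finset.sum_congr rfl fun k _ => ?_
        split_ifs with hc
        · exact term_eq n h i j k hn hc.1 hc.2.1 hc.2.2.1 hc.2.2.2.1 hc.2.2.2.2
        · simp
    _ = (1 / ((n ! : ℝ) * ((n - 2)! : ℝ) ^ 2)) *
          ((∑ h ∈ Finset.range (n + 1), ∑ i ∈ Finset.range (n + 1),
            ∑ j ∈ Finset.range (n + 1), ∑ k ∈ Finset.range (n + 1),
            (if h + i + j + k = n ∧ 1 ≤ h + i ∧ 1 ≤ i + j ∧ 1 ≤ j + k ∧ 1 ≤ k + h then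
              n.choose (h+i) * (h+i).choose h * ((n-(h+i)).choose j *
                ((n-2).choose (h+i-1) * (n-2).choose (i+j-1)))
            else 0) : ℕ) : ℝ) := by
        simp only [← Finset.mul_sum]
        push_cast
        rfl
    _ = (1 / ((n ! : ℝ) * ((n - 2)! : ℝ) ^ 2)) * ((2 * n - 2).choose (n - 1) : ℝ) ^ 2 := by
        rw [key n hn]
        push_cast
        ring
end

section
/- Let Y_n be a Poisson random variable with mean n/κ, for a fixed integer κ ≥ 1. Then sup over y of | √(n/κ) · P(Y_n = ⌊n/κ + y√(n/κ)⌋) − e^{−y²/2}/√(2π) | tends to 0 as n → ∞. -/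
open Filter

section PoissonLLTAux
open Real

noncomputable def pmf (lam : ℝ) (k : ℕ) : ℝ :=
  Real.sqrt lam * (Real.exp (-lam) * lam ^ k / k.factorial)

noncomputable def Err (lam : ℝ) : ℝ :=
  6 * (1 - Real.sqrt π / Stirling.stirlingSeq ⌊lam / 2⌋₊)
    + 18 * lam ^ (-(2 : ℝ)/5) + 285 * lam ^ (-(1 : ℝ)/5)

lemma ten_pow_rpow (a : ℝ) (n m : ℕ) (h : a * n = m) : ((10:ℝ)^n) ^ a = 10 ^ m := by
  rw [← Real.rpow_natCast (10:ℝ) n, ← Real.rpow_mul (by norm_num), mul_comm, h,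
    Real.rpow_natCast]

lemma rpow_lb (lam : ℝ) (h : (10:ℝ)^10 ≤ lam) (a : ℝ) (m : ℕ) (ha : 0 ≤ a) (hm : a * 10 = m) :
    (10:ℝ)^m ≤ lam ^ a := by
  calc (10:ℝ)^m = ((10:ℝ)^10) ^ a := (ten_pow_rpow a 10 m hm).symm
    _ ≤ lam ^ a := Real.rpow_le_rpow (by positivity) h ha

lemma rpow_neg_ub (lam : ℝ) (h : (10:ℝ)^10 ≤ lam) (a : ℝ) (m : ℕ) (ha : 0 ≤ a) (hm : a * 10 = m) :
    lam ^ (-a) ≤ ((10:ℝ)^m)⁻¹ := by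
  have hlam : (0:ℝ) < lam := lt_of_lt_of_le (by positivity) h
  rw [Real.rpow_neg hlam.le]
  exact inv_anti₀ (by positivity) (rpow_lb lam h a m ha hm)


lemma gauss_deriv (t : ℝ) : HasDerivAt (fun u : ℝ => Real.exp (-u^2/2)) (-t * Real.exp (-t^2/2)) t := by
  have h1 : HasDerivAt (fun u : ℝ => -u^2/2) (-t) t := by
    have := ((hasDerivAt_pow 2 t).neg).div_const 2
    refine this.congr_deriv ?_
    norm_num; ring
  have := (Real.hasDerivAt_exp (-t^2/2)).comp t h1
  simpa [Function.comp_def, mul_comm] using this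

lemma gauss_lipschitz (x y : ℝ) : |Real.exp (-x^2/2) - Real.exp (-y^2/2)| ≤ |x - y| := by
  have key : ∀ a b : ℝ, a < b → |Real.exp (-b^2/2) - Real.exp (-a^2/2)| ≤ |b - a| := by
    intro a b hab
    obtain ⟨c, hc, hceq⟩ := exists_hasDerivAt_eq_slope (fun u => Real.exp (-u^2/2)) _ hab
      (fun t _ => (gauss_deriv t).continuousAt.continuousWithinAt) (fun t _ => gauss_deriv t)
    rw [eq_div_iff (by intro h; apply absurd (sub_eq_zero.mp h); intro h'; exact absurd h'.symm (ne_of_lt hab))] at hceq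
    rw [← hceq, abs_mul]
    have hcb : |(-c * Real.exp (-c^2/2))| ≤ 1 := by
      rw [abs_mul, abs_neg, abs_exp]
      have h2 : |c| ≤ Real.exp (c^2/2) := by
        have := Real.add_one_le_exp (c^2/2)
        nlinarith [abs_nonneg c, sq_abs c, sq_nonneg (|c| - 1)]
      have h3 : Real.exp (-c^2/2) * Real.exp (c^2/2) = 1 := by
        rw [← Real.exp_add]; ring_nf; exact Real.exp_zero
      nlinarith [Real.exp_pos (-c^2/2), Real.exp_pos (c^2/2), abs_nonneg c]
    calc |(-c * Real.exp (-c^2/2))| * |b - a| ≤ 1 * |b - a| :=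
          mul_le_mul_of_nonneg_right hcb (abs_nonneg _)
      _ = |b - a| := one_mul _
  rcases lt_trichotomy x y with h | h | h
  · rw [abs_sub_comm, abs_sub_comm x y]; exact key x y h
  · simp [h]
  · exact key y x h

lemma taylor_log' (t : ℝ) (ht : |t| ≤ 1/2) :
    |(1 + t) * Real.log (1 + t) - t - t^2/2| ≤ 7/2 * |t|^3 := by
  have h1 : |(-t)| < 1 := by rw [abs_neg]; linarith
  have key := Real.abs_log_sub_add_sum_range_le h1 2
  have hsum : (∑ i ∈ Finset.range 2, (-t) ^ (i + 1) / (i + 1)) = -t + t^2/2 := by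
    simp [Finset.sum_range_succ]; ring
  rw [hsum] at key
  have hlog : |Real.log (1 + t) - t + t^2/2| ≤ 2 * |t|^3 := by
    have h4 : |(-t)| ^ (2+1) / (1 - |(-t)|) ≤ 2 * |t|^3 := by
      rw [abs_neg]
      rw [div_le_iff₀ (by linarith)]
      norm_num
      have hh := mul_nonneg (pow_nonneg (abs_nonneg t) 3) (by linarith : (0:ℝ) ≤ 1 - 2*|t|)
      nlinarith [hh]
    calc |Real.log (1 + t) - t + t^2/2| = |(-t + t^2/2) + Real.log (1 - (-t))| := by
          ring_nf
      _ ≤ |(-t)| ^ (2+1) / (1 - |(-t)|) := key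
      _ ≤ 2 * |t|^3 := h4
  set r := Real.log (1 + t) - t + t^2/2 with hr
  have hphi : (1 + t) * Real.log (1 + t) - t - t^2/2 = (1 + t) * r - t^3/2 := by
    rw [hr]; ring
  rw [hphi]
  have h1t : |1 + t| ≤ 3/2 := by
    rw [abs_le] at ht ⊢; constructor <;> linarith [ht.1, ht.2]
  have htri : |(1 + t) * r - t^3/2| ≤ |1 + t| * |r| + |t|^3/2 := by
    calc |(1 + t) * r - t^3/2| ≤ |(1 + t) * r| + |t^3/2| := abs_sub _ _
      _ = |1 + t| * |r| + |t|^3/2 := by rw [abs_mul, abs_div, abs_pow]; norm_num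
  have h5 : |1 + t| * |r| ≤ (3/2) * (2 * |t|^3) :=
    mul_le_mul h1t hlog (abs_nonneg r) (by norm_num)
  linarith

lemma stirling_lower' (k : ℕ) (hk : 1 ≤ k) : Real.sqrt π ≤ Stirling.stirlingSeq k := by
  obtain ⟨m, rfl⟩ := Nat.exists_eq_add_of_le hk
  have := Stirling.stirlingSeq'_antitone.le_of_tendsto
    (Stirling.tendsto_stirlingSeq_sqrt_pi.comp (tendsto_add_atTop_nat 1)) m
  simpa [Function.comp, Nat.succ_eq_add_one, add_comm] using this


lemma pmf_eq' (lam : ℝ) (hlam : 0 < lam) (k : ℕ) (hk : 1 ≤ k) :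
    Real.sqrt (2 * π) * pmf lam k =
      (Real.sqrt π / Stirling.stirlingSeq k) * Real.sqrt (lam / k) *
        Real.exp ((k : ℝ) - lam - k * Real.log ((k : ℝ) / lam)) := by
  have hk0 : (0 : ℝ) < k := by exact_mod_cast hk
  have hfac : (0 : ℝ) < (k.factorial : ℝ) := by exact_mod_cast k.factorial_pos
  have hsk : Stirling.stirlingSeq k
      = (k.factorial : ℝ) / (Real.sqrt (2 * k) * ((k : ℝ) / Real.exp 1) ^ k) := rfl
  have hpow : ((k : ℝ) / lam) ^ k = Real.exp (k * Real.log ((k : ℝ) / lam)) := by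
    rw [Real.exp_nat_mul, Real.exp_log (div_pos hk0 hlam)]
  have hexp : Real.exp ((k : ℝ) - lam - k * Real.log ((k : ℝ) / lam))
      = Real.exp k * Real.exp (-lam) / ((k : ℝ) / lam) ^ k := by
    rw [hpow, ← Real.exp_add, ← Real.exp_sub]; ring_nf
  rw [pmf, hsk, hexp, Real.sqrt_mul (by norm_num : (0:ℝ) ≤ 2) π,
    Real.sqrt_mul (by norm_num : (0:ℝ) ≤ 2) (k : ℝ),
    Real.sqrt_div hlam.le, div_pow ((k:ℝ)) lam, div_pow ((k:ℝ)) (Real.exp 1),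
    ← Real.exp_one_pow, Real.exp_one_pow]
  have hek : Real.exp 1 ^ k = Real.exp k := by rw [← Real.exp_nat_mul, mul_one]
  rw [div_pow ((k:ℝ))] at *
  have h2 : (0:ℝ) < Real.sqrt 2 := Real.sqrt_pos.mpr (by norm_num)
  have hsl : (0:ℝ) < Real.sqrt lam := Real.sqrt_pos.mpr hlam
  have hsknat : (0:ℝ) < Real.sqrt k := Real.sqrt_pos.mpr hk0
  have hkk : (0:ℝ) < (k:ℝ) ^ k := pow_pos hk0 k
  have hlk : (0:ℝ) < lam ^ k := pow_pos hlam k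
  have hexp1 : (0:ℝ) < Real.exp 1 ^ k := pow_pos (Real.exp_pos 1) k
  field_simp


lemma stirling_antitone {m k : ℕ} (hm : 1 ≤ m) (hmk : m ≤ k) :
    Stirling.stirlingSeq k ≤ Stirling.stirlingSeq m := by
  obtain ⟨a, rfl⟩ := Nat.exists_eq_add_of_le hm
  obtain ⟨b, rfl⟩ := Nat.exists_eq_add_of_le hmk
  have h := Stirling.stirlingSeq'_antitone (show a ≤ a + b by omega)
  simp only [Function.comp, Nat.succ_eq_add_one] at h
  rwa [show 1 + a + b = a + b + 1 by omega, show 1 + a = a + 1 by omega]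

set_option maxHeartbeats 2000000 in
lemma main_region (lam : ℝ) (hlam : (10:ℝ)^10 ≤ lam) (k : ℕ)
    (hreg : |(k:ℝ) - lam| ≤ 2 * lam ^ ((3:ℝ)/5) + 1) :
    |pmf lam k - Real.exp (-(((k:ℝ) - lam)/Real.sqrt lam)^2/2) / Real.sqrt (2*π)| ≤ Err lam := by
  have hlam0 : (0:ℝ) < lam := lt_of_lt_of_le (by positivity) hlam
  have hlam1 : (1:ℝ) ≤ lam := le_trans (by norm_num) hlam
  have hlam2 : (4:ℝ) ≤ lam := le_trans (by norm_num) hlam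
  have hB1 : (1:ℝ) ≤ lam ^ ((3:ℝ)/5) := Real.one_le_rpow hlam1 (by norm_num)
  have hreg3 : |(k:ℝ) - lam| ≤ 3 * lam ^ ((3:ℝ)/5) := by linarith
  -- the rpow numeric bounds
  have h25 : lam ^ (-(2:ℝ)/5) ≤ ((10:ℝ)^4)⁻¹ := by
    have := rpow_neg_ub lam hlam (2/5) 4 (by norm_num) (by norm_num)
    rw [show -(2:ℝ)/5 = -(2/5) by norm_num]; exact this
  have h15 : lam ^ (-(1:ℝ)/5) ≤ ((10:ℝ)^2)⁻¹ := by
    have := rpow_neg_ub lam hlam (1/5) 2 (by norm_num) (by norm_num)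
    rw [show -(1:ℝ)/5 = -(1/5) by norm_num]; exact this
  have h25pos : (0:ℝ) < lam ^ (-(2:ℝ)/5) := Real.rpow_pos_of_pos hlam0 _
  have h15pos : (0:ℝ) < lam ^ (-(1:ℝ)/5) := Real.rpow_pos_of_pos hlam0 _
  -- t
  set t : ℝ := ((k:ℝ) - lam)/lam with htdef
  have ht1 : |t| ≤ 3 * lam ^ (-(2:ℝ)/5) := by
    rw [htdef, abs_div, abs_of_pos hlam0, div_le_iff₀ hlam0]
    calc |(k:ℝ) - lam| ≤ 3 * lam ^ ((3:ℝ)/5) := hreg3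
      _ = 3 * lam ^ (-(2:ℝ)/5) * lam := by
          rw [show (3:ℝ)/5 = -(2:ℝ)/5 + 1 by norm_num, Real.rpow_add hlam0, Real.rpow_one]
          ring
  have ht2 : |t| ≤ 1/2 := by
    calc |t| ≤ 3 * lam ^ (-(2:ℝ)/5) := ht1
      _ ≤ 3 * ((10:ℝ)^4)⁻¹ := by linarith
      _ ≤ 1/2 := by norm_num
  have hkl : lam/2 ≤ (k:ℝ) ∧ (k:ℝ) ≤ 3*lam/2 := by
    have habs : |(k:ℝ) - lam| ≤ 1/2 * lam := by
      have he : |t| = |(k:ℝ) - lam| / lam := by rw [htdef, abs_div, abs_of_pos hlam0]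
      rw [he, div_le_iff₀ hlam0] at ht2
      exact ht2
    rw [abs_le] at habs
    constructor <;> [linarith [habs.1]; linarith [habs.2]]
  have hk0 : (0:ℝ) < (k:ℝ) := lt_of_lt_of_le (by linarith) hkl.1
  have hk1 : 1 ≤ k := by
    have h1 : (1:ℝ) ≤ (k:ℝ) := by linarith [hkl.1]
    exact_mod_cast Nat.one_le_cast.mpr (by exact_mod_cast h1)
  -- x and E
  set x : ℝ := ((k:ℝ) - lam)/Real.sqrt lam with hxdef
  have hsq : Real.sqrt lam ^ 2 = lam := Real.sq_sqrt hlam0.le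
  have hx2 : x^2 = ((k:ℝ) - lam)^2 / lam := by
    rw [hxdef, div_pow, hsq]
  set E : ℝ := (k:ℝ) - lam - k * Real.log ((k:ℝ)/lam) + x^2/2 with hEdef
  have h1t : 1 + t = (k:ℝ)/lam := by rw [htdef]; field_simp; ring
  have hEeq : E = -(lam * ((1 + t) * Real.log (1 + t) - t - t^2/2)) := by
    rw [hEdef, h1t, htdef, hx2]
    field_simp
    ring
  have hEbound : |E| ≤ 95 * lam ^ (-(1:ℝ)/5) := by
    rw [hEeq, abs_neg, abs_mul, abs_of_pos hlam0]
    have htl := taylor_log' t ht2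
    have h3 : |t|^3 ≤ (3 * lam ^ (-(2:ℝ)/5))^3 :=
      pow_le_pow_left₀ (abs_nonneg t) ht1 3
    have h4 : lam * (3 * lam ^ (-(2:ℝ)/5))^3 = 27 * lam ^ (-(1:ℝ)/5) := by
      have e1 : (lam ^ (-(2:ℝ)/5))^(3:ℕ) = lam ^ (-(6:ℝ)/5) := by
        rw [← Real.rpow_natCast (lam ^ (-(2:ℝ)/5)) 3, ← Real.rpow_mul hlam0.le]
        norm_num
      have e2 : lam * lam ^ (-(6:ℝ)/5) = lam ^ (-(1:ℝ)/5) := by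
        nth_rewrite 1 [← Real.rpow_one lam]
        rw [← Real.rpow_add hlam0]
        norm_num
      rw [mul_pow, e1, ← e2]
      ring
    calc lam * |(1 + t) * Real.log (1 + t) - t - t^2/2| ≤ lam * (7/2 * |t|^3) :=
          mul_le_mul_of_nonneg_left htl hlam0.le
      _ ≤ lam * (7/2 * (3 * lam ^ (-(2:ℝ)/5))^3) := by
          apply mul_le_mul_of_nonneg_left _ hlam0.le
          linarith
      _ = 7/2 * (lam * (3 * lam ^ (-(2:ℝ)/5))^3) := by ring
      _ = 7/2 * (27 * lam ^ (-(1:ℝ)/5)) := by rw [h4]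
      _ ≤ 95 * lam ^ (-(1:ℝ)/5) := by linarith
  set δ : ℝ := 95 * lam ^ (-(1:ℝ)/5) with hδdef
  have hδ0 : 0 ≤ δ := by positivity
  have hδ1 : δ ≤ 1 := by
    calc δ ≤ 95 * ((10:ℝ)^2)⁻¹ := by rw [hδdef]; linarith
      _ ≤ 1 := by norm_num
  set m : ℕ := ⌊lam/2⌋₊ with hmdef
  have hm1 : 1 ≤ m := Nat.le_floor (by push_cast; linarith)
  have hmk : m ≤ k := by
    have h1 : (m:ℝ) ≤ lam/2 := Nat.floor_le (by linarith)
    exact_mod_cast Nat.cast_le.mp (show (m:ℝ) ≤ (k:ℝ) by linarith [hkl.1])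
  have hsqpi : (0:ℝ) < Real.sqrt π := Real.sqrt_pos.mpr Real.pi_pos
  have hsm : Real.sqrt π ≤ Stirling.stirlingSeq m := stirling_lower' m hm1
  have hsk : Real.sqrt π ≤ Stirling.stirlingSeq k := stirling_lower' k hk1
  have hsk0 : (0:ℝ) < Stirling.stirlingSeq k := lt_of_lt_of_le hsqpi hsk
  have hsm0 : (0:ℝ) < Stirling.stirlingSeq m := lt_of_lt_of_le hsqpi hsm
  set P : ℝ := Real.sqrt π / Stirling.stirlingSeq k with hPdef
  set p : ℝ := Real.sqrt π / Stirling.stirlingSeq m with hpdef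
  set Q : ℝ := Real.sqrt (lam / k) with hQdef
  set R : ℝ := Real.exp E with hRdef
  have hP1 : P ≤ 1 := (div_le_one hsk0).mpr hsk
  have hP0 : 0 ≤ P := by positivity
  have hpP : p ≤ P :=
    div_le_div_of_nonneg_left hsqpi.le hsk0 (stirling_antitone hm1 hmk)
  have hp1 : p ≤ 1 := (div_le_one hsm0).mpr hsm
  have hQ0 : 0 ≤ Q := Real.sqrt_nonneg _
  have hQsq : Q^2 = lam / k := Real.sq_sqrt (by positivity)
  have hsplit35 : 3 * lam ^ ((3:ℝ)/5) = 3 * lam ^ (-(2:ℝ)/5) * lam := by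
    rw [show (3:ℝ)/5 = -(2:ℝ)/5 + 1 by norm_num, Real.rpow_add hlam0, Real.rpow_one]
    ring
  have hQ1 : |Q - 1| ≤ 6 * lam ^ (-(2:ℝ)/5) := by
    have hkey : |Q - 1| * (Q + 1) = |Q^2 - 1| := by
      rw [← abs_of_pos (show (0:ℝ) < Q + 1 by linarith), ← abs_mul]
      ring_nf
    have h6 : |Q^2 - 1| ≤ 6 * lam ^ (-(2:ℝ)/5) := by
      rw [hQsq]
      have : lam / k - 1 = (lam - k) / k := by field_simp
      rw [this, abs_div, abs_of_pos hk0, div_le_iff₀ hk0]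
      have hlk : |lam - (k:ℝ)| ≤ 3 * lam ^ (-(2:ℝ)/5) * lam := by
        rw [abs_sub_comm]; rw [hsplit35] at hreg3; exact hreg3
      have hl2k : lam ≤ 2 * (k:ℝ) := by linarith [hkl.1]
      calc |lam - (k:ℝ)| ≤ 3 * lam ^ (-(2:ℝ)/5) * lam := hlk
        _ ≤ 3 * lam ^ (-(2:ℝ)/5) * (2 * (k:ℝ)) :=
            mul_le_mul_of_nonneg_left hl2k (by positivity)
        _ = 6 * lam ^ (-(2:ℝ)/5) * (k:ℝ) := by ring
    calc |Q - 1| = |Q - 1| * 1 := (mul_one _).symm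
      _ ≤ |Q - 1| * (Q + 1) := by
          apply mul_le_mul_of_nonneg_left _ (abs_nonneg _)
          linarith
      _ = |Q^2 - 1| := hkey
      _ ≤ 6 * lam ^ (-(2:ℝ)/5) := h6
  have hQ2 : Q ≤ 2 := by
    have h1 := (abs_le.mp hQ1).2
    have h2 : 6 * lam ^ (-(2:ℝ)/5) ≤ 6 * ((10:ℝ)^4)⁻¹ := by linarith
    have h3 : (6:ℝ) * ((10:ℝ)^4)⁻¹ ≤ 1 := by norm_num
    linarith
  have hexp3 : Real.exp 1 ≤ 3 := by linarith [Real.exp_one_lt_d9]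
  have hR3 : R ≤ 3 := by
    rw [hRdef]
    calc Real.exp E ≤ Real.exp 1 := Real.exp_le_exp.mpr (by
          have := (abs_le.mp hEbound).2; linarith)
      _ ≤ 3 := hexp3
  have hR0 : 0 ≤ R := (Real.exp_pos E).le
  have hR1 : |R - 1| ≤ 3 * δ := by
    have hEd := abs_le.mp hEbound
    have hb : 1 - δ ≤ Real.exp (-δ) := by linarith [Real.add_one_le_exp (-δ)]
    have hmul : Real.exp (-δ) * Real.exp δ = 1 := by
      rw [← Real.exp_add]; simp
    have hup : R - 1 ≤ 3 * δ := by
      have h1 : R ≤ Real.exp δ := Real.exp_le_exp.mpr (by linarith)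
      have h2 : Real.exp δ ≤ 3 := le_trans (Real.exp_le_exp.mpr hδ1) hexp3
      have h3 : (1 - δ) * Real.exp δ ≤ 1 := by
        calc (1 - δ) * Real.exp δ ≤ Real.exp (-δ) * Real.exp δ :=
              mul_le_mul_of_nonneg_right hb (Real.exp_pos δ).le
          _ = 1 := hmul
      have h4 : δ * Real.exp δ ≤ δ * 3 := mul_le_mul_of_nonneg_left h2 hδ0
      linarith [h1, h3, h4]
    have hdown : 1 - R ≤ 3 * δ := by
      have h1 : Real.exp (-δ) ≤ R := Real.exp_le_exp.mpr (by linarith)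
      linarith
    rw [abs_le]; constructor <;> linarith
  -- assembly
  have hkey := pmf_eq' lam hlam0 k hk1
  have hEsplit : (k:ℝ) - lam - k * Real.log ((k:ℝ)/lam) = -x^2/2 + E := by
    rw [hEdef]; ring
  rw [hEsplit, Real.exp_add] at hkey
  have hs2pi : (1:ℝ) ≤ Real.sqrt (2*π) := by
    rw [show (1:ℝ) = Real.sqrt 1 from Real.sqrt_one.symm]
    exact Real.sqrt_le_sqrt (by linarith [Real.pi_gt_three])
  have hs2pi0 : (0:ℝ) < Real.sqrt (2*π) := lt_of_lt_of_le one_pos hs2pi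
  have hpmf : pmf lam k * Real.sqrt (2*π) = Real.exp (-x^2/2) * (P * Q * R) := by
    rw [hPdef, hQdef, hRdef]
    linear_combination hkey
  have hpmf2 : pmf lam k = Real.exp (-x^2/2) * (P*Q*R) / Real.sqrt (2*π) := by
    rw [eq_div_iff (ne_of_gt hs2pi0)]; exact hpmf
  have hdiff : pmf lam k - Real.exp (-x^2/2)/Real.sqrt (2*π)
      = Real.exp (-x^2/2)/Real.sqrt (2*π) * (P*Q*R - 1) := by
    rw [hpmf2]; ring
  have hgoal : |pmf lam k - Real.exp (-x^2/2)/Real.sqrt (2*π)| ≤ Err lam := by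
    rw [hdiff, abs_mul]
    have hfac1 : |Real.exp (-x^2/2)/Real.sqrt (2*π)| ≤ 1 := by
      rw [abs_div, abs_of_pos (Real.exp_pos _), abs_of_pos hs2pi0, div_le_one hs2pi0]
      calc Real.exp (-x^2/2) ≤ 1 := by
            apply Real.exp_le_one_iff.mpr
            linarith [sq_nonneg x]
        _ ≤ Real.sqrt (2*π) := hs2pi
    have htri : |P*Q*R - 1| ≤ (1-p)*(Q*R) + |Q - 1| * R + |R - 1| := by
      have t1 : |P*Q*R - 1| ≤ |P*Q*R - Q*R| + (|Q*R - R| + |R - 1|) := by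
        calc |P*Q*R - 1| ≤ |P*Q*R - Q*R| + |Q*R - 1| := abs_sub_le (P*Q*R) (Q*R) 1
          _ ≤ |P*Q*R - Q*R| + (|Q*R - R| + |R - 1|) := by
              linarith [abs_sub_le (Q*R) R 1]
      have t2 : |P*Q*R - Q*R| = (1-P)*(Q*R) := by
        rw [show P*Q*R - Q*R = -((1-P)*(Q*R)) by ring, abs_neg, abs_of_nonneg]
        exact mul_nonneg (by linarith) (mul_nonneg hQ0 hR0)
      have t3 : |Q*R - R| = |Q - 1| * R := by
        rw [show Q*R - R = (Q - 1)*R by ring, abs_mul, abs_of_nonneg hR0]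
      have t4 : (1-P)*(Q*R) ≤ (1-p)*(Q*R) :=
        mul_le_mul_of_nonneg_right (by linarith) (mul_nonneg hQ0 hR0)
      linarith [t1, t2.le, t3.le, t4, t2.ge, t3.ge]
    have hQR : Q*R ≤ 6 := by
      calc Q*R ≤ 2*3 := mul_le_mul hQ2 hR3 hR0 (by norm_num)
        _ = 6 := by norm_num
    calc |Real.exp (-x^2/2)/Real.sqrt (2*π)| * |P*Q*R - 1| ≤ 1 * |P*Q*R - 1| :=
          mul_le_mul_of_nonneg_right hfac1 (abs_nonneg _)
      _ = |P*Q*R - 1| := one_mul _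
      _ ≤ (1-p)*(Q*R) + |Q - 1| * R + |R - 1| := htri
      _ ≤ (1-p)*6 + (6*lam^(-(2:ℝ)/5))*3 + 3*δ := by
          have a1 : (1-p)*(Q*R) ≤ (1-p)*6 := mul_le_mul_of_nonneg_left hQR (by linarith)
          have a2 : |Q - 1| * R ≤ (6*lam^(-(2:ℝ)/5))*3 :=
            mul_le_mul hQ1 hR3 hR0 (by positivity)
          linarith [hR1]
      _ = Err lam := by
          unfold Err
          rw [hδdef, hpdef, hmdef]
          ring
  exact hgoal

lemma pmf_nonneg (lam : ℝ) (hlam : 0 ≤ lam) (k : ℕ) : 0 ≤ pmf lam k := by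
  unfold pmf; positivity

lemma pmf_step (lam : ℝ) (hlam : 0 < lam) (n : ℕ) :
    pmf lam (n+1) = pmf lam n * (lam / ((n:ℝ)+1)) := by
  unfold pmf
  rw [Nat.factorial_succ]
  push_cast
  have h1 : ((n:ℝ)+1) ≠ 0 := by positivity
  have h2 : ((n.factorial :ℝ)) ≠ 0 := by exact_mod_cast n.factorial_ne_zero
  field_simp
  ring

lemma pmf_mono_incr (lam : ℝ) (hlam : 0 < lam) {a b : ℕ} (hab : a ≤ b) (hb : (b:ℝ) ≤ lam) :
    pmf lam a ≤ pmf lam b := by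
  induction b, hab using Nat.le_induction with
  | base => exact le_refl _
  | succ n hn ih =>
    have hn1 : ((n:ℝ)+1) ≤ lam := by push_cast at hb; linarith
    have hnl : (n:ℝ) ≤ lam := by linarith
    calc pmf lam a ≤ pmf lam n := ih hnl
      _ = pmf lam n * 1 := (mul_one _).symm
      _ ≤ pmf lam n * (lam / ((n:ℝ)+1)) := by
          apply mul_le_mul_of_nonneg_left _ (pmf_nonneg lam hlam.le n)
          rw [le_div_iff₀ (by positivity)]; linarith
      _ = pmf lam (n+1) := (pmf_step lam hlam n).symm

lemma pmf_mono_decr (lam : ℝ) (hlam : 0 < lam) {a b : ℕ} (hab : a ≤ b) (ha : lam ≤ (a:ℝ)) :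
    pmf lam b ≤ pmf lam a := by
  induction b, hab using Nat.le_induction with
  | base => exact le_refl _
  | succ n hn ih =>
    have hn1 : lam ≤ (n:ℝ)+1 := by
      have : (a:ℝ) ≤ (n:ℝ) := by exact_mod_cast hn
      linarith
    calc pmf lam (n+1) = pmf lam n * (lam / ((n:ℝ)+1)) := pmf_step lam hlam n
      _ ≤ pmf lam n * 1 := by
          apply mul_le_mul_of_nonneg_left _ (pmf_nonneg lam hlam.le n)
          rw [div_le_one (by positivity)]; linarith
      _ = pmf lam n := mul_one _
      _ ≤ pmf lam a := ih

set_option maxHeartbeats 1000000 in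
lemma tail_bound (lam : ℝ) (hlam : (10:ℝ)^10 ≤ lam) (k : ℕ)
    (htail : 2 * lam ^ ((3:ℝ)/5) < |(k:ℝ) - lam|) :
    pmf lam k ≤ Err lam + Real.exp (-(lam ^ ((1:ℝ)/5))/2) := by
  have hlam0 : (0:ℝ) < lam := lt_of_lt_of_le (by positivity) hlam
  have hlam1 : (1:ℝ) ≤ lam := le_trans (by norm_num) hlam
  set B := lam ^ ((3:ℝ)/5) with hBdef
  have hB1 : (1:ℝ) ≤ B := Real.one_le_rpow hlam1 (by norm_num)
  have h25 : lam ^ (-(2:ℝ)/5) ≤ ((10:ℝ)^4)⁻¹ := by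
    have := rpow_neg_ub lam hlam (2/5) 4 (by norm_num) (by norm_num)
    rw [show -(2:ℝ)/5 = -(2/5) by norm_num]; exact this
  have hsplit : B = lam ^ (-(2:ℝ)/5) * lam := by
    rw [hBdef, show (3:ℝ)/5 = -(2:ℝ)/5 + 1 by norm_num, Real.rpow_add hlam0, Real.rpow_one]
  have hBlam : B ≤ lam * ((10:ℝ)^4)⁻¹ := by
    rw [hsplit]
    have := mul_le_mul_of_nonneg_right h25 hlam0.le
    linarith
  have hBsmall : 4*B + 4 ≤ lam := by
    have h1 : 4*B ≤ 4 * (lam * ((10:ℝ)^4)⁻¹) := by linarith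
    have h2 : (4:ℝ) * (lam * ((10:ℝ)^4)⁻¹) = lam * (4/10000) := by norm_num; ring
    linarith [h1, h2.le, h2.ge, hlam]
  have hB2 : B^2 = lam ^ ((6:ℝ)/5) := by
    rw [hBdef, ← Real.rpow_natCast (lam ^ ((3:ℝ)/5)) 2, ← Real.rpow_mul hlam0.le]
    norm_num
  have hB2lam : B^2 / lam = lam ^ ((1:ℝ)/5) := by
    have e : lam ^ ((1:ℝ)/5) = lam ^ ((6:ℝ)/5) / lam ^ (1:ℝ) := by
      rw [← Real.rpow_sub hlam0]; norm_num
    rw [hB2, e, Real.rpow_one]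
  have hs2pi : (1:ℝ) ≤ Real.sqrt (2*π) := by
    rw [show (1:ℝ) = Real.sqrt 1 from Real.sqrt_one.symm]
    exact Real.sqrt_le_sqrt (by linarith [Real.pi_gt_three])
  have hsq : Real.sqrt lam ^ 2 = lam := Real.sq_sqrt hlam0.le
  -- common final step, as a claim
  have final : ∀ j : ℕ, pmf lam k ≤ pmf lam j → |(j:ℝ) - lam| ≤ 2*B + 1 →
      B ≤ |(j:ℝ) - lam| → pmf lam k ≤ Err lam + Real.exp (-(lam ^ ((1:ℝ)/5))/2) := by
    intro j hmono hreg hfar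
    have h2 := main_region lam hlam j (by rwa [← hBdef])
    have h3 : pmf lam j ≤ Err lam
        + Real.exp (-(((j:ℝ)-lam)/Real.sqrt lam)^2/2) / Real.sqrt (2*π) := by
      have := (abs_le.mp h2).2; linarith
    have hx2 : lam ^ ((1:ℝ)/5) ≤ (((j:ℝ)-lam)/Real.sqrt lam)^2 := by
      have h4 : B^2 ≤ ((j:ℝ)-lam)^2 := by
        have := sq_abs ((j:ℝ) - lam)
        calc B^2 ≤ |(j:ℝ)-lam|^2 := by
              apply pow_le_pow_left₀ (by linarith) hfar
          _ = ((j:ℝ)-lam)^2 := sq_abs _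
      calc lam ^ ((1:ℝ)/5) = B^2/lam := hB2lam.symm
        _ ≤ ((j:ℝ)-lam)^2/lam := by gcongr
        _ = (((j:ℝ)-lam)/Real.sqrt lam)^2 := by rw [div_pow, hsq]
    have h5 : Real.exp (-(((j:ℝ)-lam)/Real.sqrt lam)^2/2) / Real.sqrt (2*π)
        ≤ Real.exp (-(lam ^ ((1:ℝ)/5))/2) := by
      calc Real.exp (-(((j:ℝ)-lam)/Real.sqrt lam)^2/2) / Real.sqrt (2*π)
          ≤ Real.exp (-(((j:ℝ)-lam)/Real.sqrt lam)^2/2) :=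
            div_le_self (Real.exp_pos _).le hs2pi
        _ ≤ Real.exp (-(lam ^ ((1:ℝ)/5))/2) := Real.exp_le_exp.mpr (by linarith)
    linarith [hmono, h3, h5]
  rcases le_or_gt (k:ℝ) lam with hkle | hkgt
  · have hdist : 2*B < lam - (k:ℝ) := by rwa [abs_of_nonpos (by linarith), neg_sub] at htail
    set k₁ := ⌈lam - 2*B⌉₊ with hk1def
    have hc0 : (0:ℝ) ≤ lam - 2*B := by linarith
    have hk1l : lam - 2*B ≤ (k₁:ℝ) := Nat.le_ceil _
    have hk1u : (k₁:ℝ) < lam - 2*B + 1 := Nat.ceil_lt_add_one hc0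
    have hk1lam : (k₁:ℝ) ≤ lam := by linarith
    have hkk1 : k ≤ k₁ := by
      have h : (k:ℝ) < (k₁:ℝ) := by linarith
      exact le_of_lt (Nat.cast_lt.mp h)
    refine final k₁ (pmf_mono_incr lam hlam0 hkk1 hk1lam) ?_ ?_
    · rw [abs_le]; constructor <;> linarith
    · rw [abs_of_nonpos (by linarith), neg_sub]; linarith
  · have hdist : 2*B < (k:ℝ) - lam := by rwa [abs_of_pos (by linarith)] at htail
    set k₂ := ⌈lam + 2*B⌉₊ with hk2def
    have hk2l : lam + 2*B ≤ (k₂:ℝ) := Nat.le_ceil _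
    have hk2u : (k₂:ℝ) < lam + 2*B + 1 := Nat.ceil_lt_add_one (by linarith)
    have hk2lam : lam ≤ (k₂:ℝ) := by linarith
    have hkk2 : k₂ ≤ k := by
      rw [hk2def, Nat.ceil_le]
      push_cast
      linarith
    refine final k₂ (pmf_mono_decr lam hlam0 hkk2 hk2lam) ?_ ?_
    · rw [abs_le]; constructor <;> linarith
    · rw [abs_of_nonneg (by linarith)]; linarith

noncomputable def TotalErr (lam : ℝ) : ℝ :=
  Err lam + lam ^ (-(1:ℝ)/2) + 2 * Real.exp (-(lam ^ ((1:ℝ)/5))/2)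

lemma Err_nonneg (lam : ℝ) (hlam : (10:ℝ)^10 ≤ lam) : 0 ≤ Err lam := by
  have hlam0 : (0:ℝ) < lam := lt_of_lt_of_le (by positivity) hlam
  have hlam4 : (4:ℝ) ≤ lam := le_trans (by norm_num) hlam
  have hm1 : 1 ≤ ⌊lam/2⌋₊ := Nat.le_floor (by push_cast; linarith)
  have hsm := stirling_lower' ⌊lam/2⌋₊ hm1
  have hsqpi : (0:ℝ) < Real.sqrt π := Real.sqrt_pos.mpr Real.pi_pos
  have hp1 : Real.sqrt π / Stirling.stirlingSeq ⌊lam/2⌋₊ ≤ 1 :=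
    (div_le_one (lt_of_lt_of_le hsqpi hsm)).mpr hsm
  have h1 : (0:ℝ) ≤ lam ^ (-(2:ℝ)/5) := (Real.rpow_pos_of_pos hlam0 _).le
  have h2 : (0:ℝ) ≤ lam ^ (-(1:ℝ)/5) := (Real.rpow_pos_of_pos hlam0 _).le
  unfold Err
  have : 0 ≤ 1 - Real.sqrt π / Stirling.stirlingSeq ⌊lam/2⌋₊ := by linarith
  linarith

set_option maxHeartbeats 1000000 in
lemma y_bound (lam : ℝ) (hlam : (10:ℝ)^10 ≤ lam) (y : ℝ) :
    |Real.sqrt lam *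
        (if h : 0 ≤ ⌊lam + y * Real.sqrt lam⌋ then
          Real.exp (-lam) * lam ^ (⌊lam + y * Real.sqrt lam⌋.toNat) /
            (Nat.factorial (⌊lam + y * Real.sqrt lam⌋.toNat))
        else 0) -
      Real.exp (-(y ^ 2) / 2) / Real.sqrt (2 * π)| ≤ TotalErr lam := by
  have hlam0 : (0:ℝ) < lam := lt_of_lt_of_le (by positivity) hlam
  have hlam1 : (1:ℝ) ≤ lam := le_trans (by norm_num) hlam
  have hsl0 : (0:ℝ) < Real.sqrt lam := Real.sqrt_pos.mpr hlam0
  have hsl1 : (1:ℝ) ≤ Real.sqrt lam := by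
    rw [show (1:ℝ) = Real.sqrt 1 from Real.sqrt_one.symm]
    exact Real.sqrt_le_sqrt hlam1
  have hs2pi : (1:ℝ) ≤ Real.sqrt (2*π) := by
    rw [show (1:ℝ) = Real.sqrt 1 from Real.sqrt_one.symm]
    exact Real.sqrt_le_sqrt (by linarith [Real.pi_gt_three])
  have hs2pi0 : (0:ℝ) < Real.sqrt (2*π) := lt_of_lt_of_le one_pos hs2pi
  have hsq : Real.sqrt lam ^ 2 = lam := Real.sq_sqrt hlam0.le
  have hhalf : lam ^ (-(1:ℝ)/2) = 1 / Real.sqrt lam := by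
    rw [Real.sqrt_eq_rpow, one_div, ← Real.rpow_neg hlam0.le]
    norm_num
  have hhalfpos : (0:ℝ) < lam ^ (-(1:ℝ)/2) := Real.rpow_pos_of_pos hlam0 _
  have hhalf1 : lam ^ (-(1:ℝ)/2) ≤ 1 := by
    rw [hhalf, div_le_one hsl0]; exact hsl1
  have hexp15 : lam ^ ((1:ℝ)/5) ≤ lam := by
    calc lam ^ ((1:ℝ)/5) ≤ lam ^ (1:ℝ) :=
          Real.rpow_le_rpow_of_exponent_le hlam1 (by norm_num)
      _ = lam := Real.rpow_one lam
  have hErr : 0 ≤ Err lam := Err_nonneg lam hlam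
  have hexppos : (0:ℝ) ≤ Real.exp (-(lam ^ ((1:ℝ)/5))/2) := (Real.exp_pos _).le
  by_cases hK : 0 ≤ ⌊lam + y * Real.sqrt lam⌋
  · rw [dif_pos hK]
    set k : ℕ := ⌊lam + y * Real.sqrt lam⌋.toNat with hkdef
    have hpmfeq : Real.sqrt lam * (Real.exp (-lam) * lam ^ k / (Nat.factorial k : ℝ))
        = pmf lam k := rfl
    rw [hpmfeq]
    have hkcast : ((k:ℝ)) = (⌊lam + y * Real.sqrt lam⌋ : ℝ) := by
      rw [hkdef]; exact_mod_cast congrArg Int.cast (Int.toNat_of_nonneg hK)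
    have hfl : ((k:ℝ)) ≤ lam + y * Real.sqrt lam := by
      rw [hkcast]; exact Int.floor_le _
    have hfu : lam + y * Real.sqrt lam < (k:ℝ) + 1 := by
      rw [hkcast]; exact Int.lt_floor_add_one _
    set x : ℝ := ((k:ℝ) - lam)/Real.sqrt lam with hxdef
    have hxy : |x - y| ≤ lam ^ (-(1:ℝ)/2) := by
      have hxmy : x - y = ((k:ℝ) - (lam + y * Real.sqrt lam))/Real.sqrt lam := by
        rw [hxdef]; field_simp; ring
      rw [hhalf, hxmy, abs_div, abs_of_pos hsl0, div_le_div_iff₀ hsl0 hsl0]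
      have hnum : |(k:ℝ) - (lam + y * Real.sqrt lam)| ≤ 1 := by
        rw [abs_le]; constructor <;> linarith
      exact mul_le_mul_of_nonneg_right hnum hsl0.le
    set B := lam ^ ((3:ℝ)/5) with hBdef
    have hB1 : (1:ℝ) ≤ B := Real.one_le_rpow hlam1 (by norm_num)
    have hlips : |Real.exp (-x^2/2) - Real.exp (-(y^2)/2)| ≤ lam ^ (-(1:ℝ)/2) := by
      have h := gauss_lipschitz x y
      calc |Real.exp (-x^2/2) - Real.exp (-(y^2)/2)|
          = |Real.exp (-x^2/2) - Real.exp (-y^2/2)| := by norm_num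
        _ ≤ |x - y| := h
        _ ≤ lam ^ (-(1:ℝ)/2) := hxy
    rcases le_or_gt |(k:ℝ) - lam| (2*B) with hcase | hcase
    · have h2 := main_region lam hlam k (by rw [← hBdef]; linarith)
      rw [← hxdef] at h2
      have h3 : |Real.exp (-x^2/2)/Real.sqrt (2*π) - Real.exp (-(y^2)/2)/Real.sqrt (2*π)|
          ≤ lam ^ (-(1:ℝ)/2) := by
        rw [div_sub_div_same, abs_div, abs_of_pos hs2pi0]
        calc |Real.exp (-x^2/2) - Real.exp (-(y^2)/2)| / Real.sqrt (2*π)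
            ≤ |Real.exp (-x^2/2) - Real.exp (-(y^2)/2)| := div_le_self (abs_nonneg _) hs2pi
          _ ≤ lam ^ (-(1:ℝ)/2) := hlips
      calc |pmf lam k - Real.exp (-(y^2)/2)/Real.sqrt (2*π)|
          ≤ |pmf lam k - Real.exp (-x^2/2)/Real.sqrt (2*π)|
            + |Real.exp (-x^2/2)/Real.sqrt (2*π) - Real.exp (-(y^2)/2)/Real.sqrt (2*π)| :=
            abs_sub_le _ _ _
        _ ≤ Err lam + lam ^ (-(1:ℝ)/2) := add_le_add h2 h3
        _ ≤ TotalErr lam := by unfold TotalErr; linarith [hexppos]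
    · have h2 := tail_bound lam hlam k (by rw [← hBdef]; linarith)
      have hpm0 : 0 ≤ pmf lam k := pmf_nonneg lam hlam0.le k
      have hC : B / Real.sqrt lam = lam ^ ((1:ℝ)/10) := by
        rw [hBdef, Real.sqrt_eq_rpow, ← Real.rpow_sub hlam0]; norm_num
      have hC1 : (1:ℝ) ≤ lam ^ ((1:ℝ)/10) := Real.one_le_rpow hlam1 (by norm_num)
      have hC2 : (lam ^ ((1:ℝ)/10))^2 = lam ^ ((1:ℝ)/5) := by
        rw [← Real.rpow_natCast (lam ^ ((1:ℝ)/10)) 2, ← Real.rpow_mul hlam0.le]; norm_num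
      have hx : 2 * lam ^ ((1:ℝ)/10) ≤ |x| := by
        rw [hxdef, abs_div, abs_of_pos hsl0, le_div_iff₀ hsl0]
        calc 2 * lam ^ ((1:ℝ)/10) * Real.sqrt lam = 2 * (B / Real.sqrt lam) * Real.sqrt lam := by
              rw [hC]
          _ = 2 * B := by field_simp
          _ ≤ |(k:ℝ) - lam| := hcase.le
      have hy' : lam ^ ((1:ℝ)/10) ≤ |y| := by
        have habs := abs_sub_abs_le_abs_sub x y
        linarith [hxy, hx, hhalf1]
      have hy2 : lam ^ ((1:ℝ)/5) ≤ y^2 := by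
        calc lam ^ ((1:ℝ)/5) = (lam ^ ((1:ℝ)/10))^2 := hC2.symm
          _ ≤ |y|^2 := pow_le_pow_left₀ (by positivity) hy' 2
          _ = y^2 := sq_abs y
      have hgauss : Real.exp (-(y^2)/2) / Real.sqrt (2*π) ≤ Real.exp (-(lam ^ ((1:ℝ)/5))/2) := by
        calc Real.exp (-(y^2)/2) / Real.sqrt (2*π) ≤ Real.exp (-(y^2)/2) :=
              div_le_self (Real.exp_pos _).le hs2pi
          _ ≤ Real.exp (-(lam ^ ((1:ℝ)/5))/2) := Real.exp_le_exp.mpr (by linarith)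
      calc |pmf lam k - Real.exp (-(y^2)/2)/Real.sqrt (2*π)|
          ≤ |pmf lam k| + |Real.exp (-(y^2)/2)/Real.sqrt (2*π)| := abs_sub _ _
        _ = pmf lam k + Real.exp (-(y^2)/2)/Real.sqrt (2*π) := by
            rw [abs_of_nonneg hpm0, abs_of_pos (by positivity)]
        _ ≤ (Err lam + Real.exp (-(lam ^ ((1:ℝ)/5))/2)) + Real.exp (-(lam ^ ((1:ℝ)/5))/2) :=
            add_le_add h2 hgauss
        _ ≤ TotalErr lam := by unfold TotalErr; linarith [hhalfpos]
  · rw [dif_neg hK]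
    have hneg : lam + y * Real.sqrt lam < 0 := by
      have := Int.floor_lt.mp (lt_of_not_ge hK)
      simpa using this
    have hy : Real.sqrt lam ≤ |y| := by
      have h1 : y * Real.sqrt lam < -lam := by linarith
      have h2 : y < -Real.sqrt lam := by
        rw [← hsq] at h1
        by_contra hcon
        push_neg at hcon
        nlinarith
      calc Real.sqrt lam ≤ -y := by linarith
        _ ≤ |y| := neg_le_abs y
    have hy2 : lam ^ ((1:ℝ)/5) ≤ y^2 := by
      have : lam ≤ y^2 := by
        calc lam = Real.sqrt lam ^ 2 := hsq.symm
          _ ≤ |y|^2 := pow_le_pow_left₀ hsl0.le hy 2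
          _ = y^2 := sq_abs y
      linarith
    have hgauss : Real.exp (-(y^2)/2) / Real.sqrt (2*π) ≤ Real.exp (-(lam ^ ((1:ℝ)/5))/2) := by
      calc Real.exp (-(y^2)/2) / Real.sqrt (2*π) ≤ Real.exp (-(y^2)/2) :=
            div_le_self (Real.exp_pos _).le hs2pi
        _ ≤ Real.exp (-(lam ^ ((1:ℝ)/5))/2) := Real.exp_le_exp.mpr (by linarith)
    rw [mul_zero, zero_sub, abs_neg, abs_of_pos (by positivity)]
    unfold TotalErr
    linarith

lemma totalErr_tendsto (κ : ℕ) (hκ : 1 ≤ κ) :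
    Tendsto (fun n : ℕ => TotalErr ((n:ℝ)/κ)) atTop (nhds 0) := by
  have hκ0 : (0:ℝ) < κ := by exact_mod_cast hκ
  have hL : Tendsto (fun n : ℕ => (n:ℝ)/κ) atTop atTop :=
    tendsto_natCast_atTop_atTop.atTop_div_const hκ0
  have hsqpi : Real.sqrt π ≠ 0 := ne_of_gt (Real.sqrt_pos.mpr Real.pi_pos)
  -- stirling part
  have h1 : Tendsto (fun n : ℕ => ⌊((n:ℝ)/κ)/2⌋₊) atTop atTop :=
    tendsto_nat_floor_atTop.comp (hL.atTop_div_const two_pos)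
  have h2 : Tendsto (fun n : ℕ => Stirling.stirlingSeq ⌊((n:ℝ)/κ)/2⌋₊) atTop
      (nhds (Real.sqrt π)) := Stirling.tendsto_stirlingSeq_sqrt_pi.comp h1
  have h3 : Tendsto (fun n : ℕ =>
      6 * (1 - Real.sqrt π / Stirling.stirlingSeq ⌊((n:ℝ)/κ)/2⌋₊)) atTop (nhds 0) := by
    have := ((tendsto_const_nhds (x := Real.sqrt π)).div h2 hsqpi)
    have h4 := (tendsto_const_nhds (x := (1:ℝ))).sub this
    have h5 := h4.const_mul 6
    simpa [div_self hsqpi] using h5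
  -- rpow parts
  have hr : ∀ a : ℝ, 0 < a → Tendsto (fun n : ℕ => ((n:ℝ)/κ) ^ (-a)) atTop (nhds 0) :=
    fun a ha => (tendsto_rpow_neg_atTop ha).comp hL
  have h6 : Tendsto (fun n : ℕ => 18 * ((n:ℝ)/κ) ^ (-(2:ℝ)/5)) atTop (nhds 0) := by
    have := (hr (2/5) (by norm_num)).const_mul 18
    simpa [show -(2:ℝ)/5 = -(2/5:ℝ) by norm_num] using this
  have h7 : Tendsto (fun n : ℕ => 285 * ((n:ℝ)/κ) ^ (-(1:ℝ)/5)) atTop (nhds 0) := by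
    have := (hr (1/5) (by norm_num)).const_mul 285
    simpa [show -(1:ℝ)/5 = -(1/5:ℝ) by norm_num] using this
  have h8 : Tendsto (fun n : ℕ => ((n:ℝ)/κ) ^ (-(1:ℝ)/2)) atTop (nhds 0) := by
    have := hr (1/2) (by norm_num)
    simpa [show -(1:ℝ)/2 = -(1/2:ℝ) by norm_num] using this
  -- exp part
  have h9 : Tendsto (fun n : ℕ => 2 * Real.exp (-(((n:ℝ)/κ) ^ ((1:ℝ)/5))/2)) atTop (nhds 0) := by
    have ha : Tendsto (fun n : ℕ => ((n:ℝ)/κ) ^ ((1:ℝ)/5)) atTop atTop :=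
      (tendsto_rpow_atTop (by norm_num : (0:ℝ) < 1/5)).comp hL
    have hb : Tendsto (fun n : ℕ => -(((n:ℝ)/κ) ^ ((1:ℝ)/5))/2) atTop atBot := by
      apply Tendsto.atBot_div_const two_pos
      exact tendsto_neg_atTop_atBot.comp ha
    have := Real.tendsto_exp_atBot.comp hb
    simpa using this.const_mul 2
  have hsum := ((((h3.add h6).add h7).add h8).add h9)
  simp only [add_zero] at hsum
  have heq : (fun n : ℕ => TotalErr ((n:ℝ)/κ))
      = fun n : ℕ => ((((6 * (1 - Real.sqrt π / Stirling.stirlingSeq ⌊((n:ℝ)/κ)/2⌋₊)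
          + 18 * ((n:ℝ)/κ) ^ (-(2:ℝ)/5)) + 285 * ((n:ℝ)/κ) ^ (-(1:ℝ)/5))
          + ((n:ℝ)/κ) ^ (-(1:ℝ)/2)) + 2 * Real.exp (-(((n:ℝ)/κ) ^ ((1:ℝ)/5))/2)) := by
    funext n
    unfold TotalErr Err
    ring
  rw [heq]
  exact hsum


end PoissonLLTAux



/-- Local central limit theorem for Poisson variables: if `Y_n` is Poisson with mean
`n/κ`, then `sup_y |√(n/κ)·P(Y_n = ⌊n/κ + y√(n/κ)⌋) - e^{-y²/2}/√(2π)| → 0`. -/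
theorem poisson_local_limit (κ : ℕ) (hκ : 1 ≤ κ) :
    Tendsto (fun n : ℕ =>
      ⨆ y : ℝ,
        |Real.sqrt ((n : ℝ) / κ) *
            (if h : 0 ≤ ⌊(n : ℝ) / κ + y * Real.sqrt ((n : ℝ) / κ)⌋ then
              Real.exp (-((n : ℝ) / κ)) *
                ((n : ℝ) / κ) ^ (⌊(n : ℝ) / κ + y * Real.sqrt ((n : ℝ) / κ)⌋.toNat) /
                (Nat.factorial (⌊(n : ℝ) / κ + y * Real.sqrt ((n : ℝ) / κ)⌋.toNat))
            else 0) -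
          Real.exp (-(y ^ 2) / 2) / Real.sqrt (2 * Real.pi)|)
      atTop (nhds 0) := by
  have hκ0 : (0:ℝ) < κ := by exact_mod_cast hκ
  apply squeeze_zero' (g := fun n : ℕ => TotalErr ((n:ℝ)/κ))
  · filter_upwards with n
    exact Real.iSup_nonneg (fun y => abs_nonneg _)
  · filter_upwards [eventually_ge_atTop (10^10 * κ)] with n hn
    have hlam : (10:ℝ)^10 ≤ (n:ℝ)/κ := by
      rw [le_div_iff₀ hκ0]
      exact_mod_cast hn
    exact ciSup_le (fun y => y_bound ((n:ℝ)/κ) hlam y)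
  · exact totalErr_tendsto κ hκ
end

section
/- Let ζ, ξ be independent exponential random variables with mean 1 and let t ∈ [0,∞). Then E[ζ · 1{ξ/ζ ≤ t}] = 1 − 1/(1+t)² and E[ξ · 1{ξ/ζ ≤ t}] = t²/(1+t)². -/
open scoped NNReal ENNReal
open MeasureTheory ProbabilityTheory Real Set

namespace SlopeAux

lemma pdfReal_eq (x : ℝ) :
    exponentialPDFReal 1 x = if 0 ≤ x then exp (-x) else 0 := by
  unfold exponentialPDFReal gammaPDFReal
  split_ifs with h <;> simp [Real.Gamma_one]

lemma expMeasure_one_eq :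
    expMeasure 1 = volume.withDensity
      (fun x => ((Real.toNNReal (exponentialPDFReal 1 x) : ℝ≥0) : ℝ≥0∞)) := rfl

lemma meas_pdf : Measurable fun x => Real.toNNReal (exponentialPDFReal 1 x) :=
  (measurable_exponentialPDFReal 1).real_toNNReal

lemma smul_eq_indicator (g : ℝ → ℝ) (x : ℝ) :
    (Real.toNNReal (exponentialPDFReal 1 x)) • g x
      = (Ici (0:ℝ)).indicator (fun x => exp (-x) * g x) x := by
  rw [NNReal.smul_def, Real.coe_toNNReal _ (exponentialPDFReal_nonneg one_pos x), pdfReal_eq]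
  by_cases h : 0 ≤ x <;> simp [indicator, h]

lemma integral_expMeasure (g : ℝ → ℝ) :
    ∫ x, g x ∂expMeasure 1 = ∫ x in Ioi 0, exp (-x) * g x := by
  rw [expMeasure_one_eq, integral_withDensity_eq_integral_smul meas_pdf]
  simp_rw [smul_eq_indicator]
  rw [integral_indicator measurableSet_Ici, integral_Ici_eq_integral_Ioi]

instance : IsProbabilityMeasure (expMeasure 1) := isProbabilityMeasure_expMeasure one_pos

lemma meas_Iic {c : ℝ} (hc : 0 ≤ c) :
    ((expMeasure 1) (Iic c)).toReal = 1 - exp (-c) := by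
  have h := cdf_expMeasure_eq one_pos c
  rw [cdf_eq_real, if_pos hc, one_mul] at h
  exact h

lemma meas_Iic_zero : (expMeasure 1) (Iic 0) = 0 := by
  have h := meas_Iic le_rfl
  rw [neg_zero, exp_zero, sub_self] at h
  exact (ENNReal.toReal_eq_zero_iff _).mp h |>.resolve_right (measure_ne_top _ _)

lemma ae_pos : ∀ᵐ x ∂expMeasure 1, 0 < x := by
  rw [ae_iff]
  convert meas_Iic_zero using 2
  ext x; simp [not_lt]

lemma setIntegral_Iic (g : ℝ → ℝ) {c : ℝ} (hc : 0 ≤ c) :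
    ∫ x in Iic c, g x ∂expMeasure 1 = ∫ x in Ioc 0 c, exp (-x) * g x := by
  rw [expMeasure_one_eq, setIntegral_withDensity_eq_setIntegral_smul meas_pdf _ measurableSet_Iic]
  simp_rw [smul_eq_indicator]
  rw [setIntegral_indicator measurableSet_Ici]
  have h1 : Iic c ∩ Ici 0 = Icc 0 c := by ext x; simp [and_comm]
  rw [h1, integral_Icc_eq_integral_Ioc]

lemma J {c : ℝ} (hc : 0 ≤ c) :
    ∫ y in Iic c, y ∂expMeasure 1 = 1 - exp (-c) * (1 + c) := by
  rw [setIntegral_Iic _ hc, ← intervalIntegral.integral_of_le hc]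
  have hd : ∀ y ∈ uIcc (0:ℝ) c, HasDerivAt (fun y => -((1+y) * exp (-y))) (exp (-y) * y) y := by
    intro y _
    have h1 : HasDerivAt (fun y : ℝ => 1 + y) 1 y := (hasDerivAt_id y).const_add 1
    have h2 : HasDerivAt (fun y : ℝ => exp (-y)) (-exp (-y)) y := by
      simpa using ((hasDerivAt_id y).neg).exp
    exact (h1.mul h2).neg.congr_deriv (by ring)
  have hi : IntervalIntegrable (fun y => exp (-y) * y) volume 0 c :=
    (Continuous.mul (by continuity) continuous_id).intervalIntegrable 0 c
  rw [intervalIntegral.integral_eq_sub_of_hasDerivAt hd hi]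
  rw [show (-(0:ℝ)) = 0 by norm_num, exp_zero]
  ring

lemma integrable_id : Integrable (fun x : ℝ => x) (expMeasure 1) := by
  rw [expMeasure_one_eq, integrable_withDensity_iff_integrable_smul meas_pdf]
  simp only [smul_eq_indicator (fun x : ℝ => x)]
  rw [integrable_indicator_iff measurableSet_Ici]
  have h : IntegrableOn (fun x : ℝ => x * exp (-(1 * x))) (Ioi 0) := by
    have hh := integrableOn_rpow_mul_exp_neg_mul_rpow (by norm_num : (-1:ℝ) < 1) one_pos one_pos
    refine hh.congr_fun (fun x hx => ?_) measurableSet_Ioi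
    dsimp only; rw [rpow_one, neg_mul]
  have h2 : IntegrableOn (fun x : ℝ => exp (-x) * x) (Ioi 0) :=
    h.congr_fun (fun x _ => by dsimp only; rw [one_mul, mul_comm]) measurableSet_Ioi
  exact Iff.mpr integrableOn_Ici_iff_integrableOn_Ioi h2


lemma intOn_exp {b : ℝ} (hb : 0 < b) :
    IntegrableOn (fun x : ℝ => exp (-(b * x))) (Ioi 0) := by
  simpa [neg_mul] using exp_neg_integrableOn_Ioi 0 hb

lemma intOn_id_exp {b : ℝ} (hb : 0 < b) :
    IntegrableOn (fun x : ℝ => x * exp (-(b * x))) (Ioi 0) := by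
  have h := integrableOn_rpow_mul_exp_neg_mul_rpow (by norm_num : (-1:ℝ) < 1) one_pos hb
  refine h.congr_fun (fun x hx => ?_) measurableSet_Ioi
  dsimp only; rw [rpow_one, neg_mul]

lemma int_exp {b : ℝ} (hb : 0 < b) :
    ∫ x in Ioi 0, exp (-(b * x)) = 1 / b := by
  have h := integral_rpow_mul_exp_neg_mul_Ioi (by norm_num : (0:ℝ) < 1) hb
  rw [show ((1:ℝ)/b)^(1:ℝ) = 1/b by rw [rpow_one], Real.Gamma_one, mul_one] at h
  rw [← h]
  refine setIntegral_congr_fun measurableSet_Ioi (fun x hx => ?_)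
  rw [sub_self, rpow_zero, one_mul]

lemma int_id_exp {b : ℝ} (hb : 0 < b) :
    ∫ x in Ioi 0, x * exp (-(b * x)) = 1 / b ^ 2 := by
  have h := integral_rpow_mul_exp_neg_mul_Ioi (by norm_num : (0:ℝ) < 2) hb
  have hg : Real.Gamma 2 = 1 := by
    rw [show (2:ℝ) = 1 + 1 by norm_num, Real.Gamma_add_one one_ne_zero, Real.Gamma_one, mul_one]
  rw [hg, mul_one, show ((1:ℝ)/b)^(2:ℝ) = 1/b^2 by
    rw [show (2:ℝ) = ((2:ℕ):ℝ) by norm_num, rpow_natCast, div_pow, one_pow]] at h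
  rw [← h]
  refine setIntegral_congr_fun measurableSet_Ioi (fun x hx => ?_)
  norm_num

end SlopeAux

open SlopeAux Set Real

/-- For `ζ, ξ` i.i.d. exponential of mean 1 and `t ≥ 0`,
`E[ζ·1{ξ/ζ ≤ t}] = 1 - 1/(1+t)²` and `E[ξ·1{ξ/ζ ≤ t}] = t²/(1+t)²`. -/
theorem expectation_on_slope_event (t : ℝ) (ht : 0 ≤ t) :
    (∫ p in {p : ℝ × ℝ | p.2 / p.1 ≤ t}, p.1 ∂(expMeasure 1).prod (expMeasure 1)) =
        1 - 1 / (1 + t) ^ 2 ∧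
    (∫ p in {p : ℝ × ℝ | p.2 / p.1 ≤ t}, p.2 ∂(expMeasure 1).prod (expMeasure 1)) =
        t ^ 2 / (1 + t) ^ 2 := by
  have h1t : (0:ℝ) < 1 + t := by linarith
  set s : Set (ℝ × ℝ) := {p : ℝ × ℝ | p.2 / p.1 ≤ t} with hs_def
  have hs : MeasurableSet s := measurableSet_le (measurable_snd.div measurable_fst)
    measurable_const
  have hint1 : Integrable (fun p : ℝ × ℝ => p.1) ((expMeasure 1).prod (expMeasure 1)) := by
    simpa using integrable_id.mul_prod (integrable_const (1:ℝ))
  have hint2 : Integrable (fun p : ℝ × ℝ => p.2) ((expMeasure 1).prod (expMeasure 1)) := by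
    simpa using (integrable_const (1:ℝ)).mul_prod integrable_id
  have hset : ∀ x : ℝ, 0 < x → ∀ g : ℝ × ℝ → ℝ,
      (fun y => s.indicator g (x, y)) = fun y => (Iic (t*x)).indicator (fun y => g (x, y)) y := by
    intro x hx g
    ext y
    simp only [indicator, hs_def, mem_setOf_eq, mem_Iic, div_le_iff₀ hx, mul_comm x t]
  constructor
  · have key : (∫ p in s, p.1 ∂(expMeasure 1).prod (expMeasure 1))
        = ∫ x, x * (1 - exp (-(t*x))) ∂expMeasure 1 := by
      rw [← integral_indicator hs, integral_prod _ (hint1.indicator hs)]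
      refine integral_congr_ae ?_
      filter_upwards [ae_pos] with x hx
      rw [hset x hx]
      rw [integral_indicator measurableSet_Iic, setIntegral_const,
        measureReal_def, meas_Iic (by positivity), smul_eq_mul]
      ring
    rw [key, integral_expMeasure]
    have split : ∀ x ∈ Ioi (0:ℝ), exp (-x) * (x * (1 - exp (-(t*x))))
        = x * exp (-(1*x)) - x * exp (-((1+t)*x)) := by
      intro x _
      rw [show -((1+t)*x) = -x + -(t*x) by ring, exp_add, show -(1*x) = -x by ring]
      ring
    rw [setIntegral_congr_fun measurableSet_Ioi split,
      integral_sub (intOn_id_exp one_pos) (intOn_id_exp h1t),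
      int_id_exp one_pos, int_id_exp h1t]
    norm_num
  · have key : (∫ p in s, p.2 ∂(expMeasure 1).prod (expMeasure 1))
        = ∫ x, (1 - exp (-(t*x)) * (1 + t*x)) ∂expMeasure 1 := by
      rw [← integral_indicator hs, integral_prod _ (hint2.indicator hs)]
      refine integral_congr_ae ?_
      filter_upwards [ae_pos] with x hx
      rw [hset x hx]
      rw [integral_indicator measurableSet_Iic]
      exact J (by positivity)
    rw [key, integral_expMeasure]
    have split : ∀ x ∈ Ioi (0:ℝ), exp (-x) * (1 - exp (-(t*x)) * (1 + t*x))
        = (exp (-(1*x)) - exp (-((1+t)*x))) - t * (x * exp (-((1+t)*x))) := by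
      intro x _
      rw [show -((1+t)*x) = -x + -(t*x) by ring, exp_add, show -(1*x) = -x by ring]
      ring
    have ha : IntegrableOn (fun x : ℝ => exp (-(1*x)) - exp (-((1+t)*x))) (Ioi 0) :=
      (intOn_exp one_pos).sub (intOn_exp h1t)
    have hb : IntegrableOn (fun x : ℝ => t * (x * exp (-((1+t)*x)))) (Ioi 0) :=
      (intOn_id_exp h1t).const_mul t
    rw [setIntegral_congr_fun measurableSet_Ioi split,
      integral_sub ha hb,
      integral_sub (intOn_exp one_pos) (intOn_exp h1t),
      MeasureTheory.integral_const_mul, int_exp one_pos, int_exp h1t, int_id_exp h1t]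
    field_simp
    ring
end

section
/- Let ζ, ξ be independent exponential random variables with mean 1, let 0 ≤ s < t ≤ ∞, let p = 1/(1+s) − 1/(1+t), and condition on the event {s < ξ/ζ ≤ t}, which has probability p. Then the conditional expectation of ξ given this event equals ((t/(1+t))² − (s/(1+s))²)/p. -/
open MeasureTheory ProbabilityTheory
open scoped ENNReal

open Real Set Filter
open scoped Topology



lemma aux_hasDerivAt_exp (c x : ℝ) (hc : c ≠ 0) :
    HasDerivAt (fun y : ℝ => -(exp (-(c*y)) / c)) (exp (-(c*x))) x := by
  have hlin : HasDerivAt (fun y : ℝ => -(c*y)) (-c) x := by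
    simpa using ((hasDerivAt_id x).const_mul c).fun_neg
  have h := (hlin.exp.div_const c).fun_neg
  refine h.congr_deriv ?_
  field_simp

lemma aux_hasDerivAt_xexp (c x : ℝ) (hc : c ≠ 0) :
    HasDerivAt (fun y : ℝ => -((c*y+1)/c^2 * exp (-(c*y)))) (x * exp (-(c*x))) x := by
  have h1 : HasDerivAt (fun y : ℝ => (c*y+1)/c^2) (c/c^2) x := by
    have : HasDerivAt (fun y : ℝ => c*y+1) c x := by
      simpa using ((hasDerivAt_id x).const_mul c).add_const 1
    exact this.div_const _
  have hlin : HasDerivAt (fun y : ℝ => -(c*y)) (-c) x := by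
    simpa using ((hasDerivAt_id x).const_mul c).fun_neg
  have h := (h1.fun_mul hlin.exp).fun_neg
  refine h.congr_deriv ?_
  field_simp
  ring

lemma aux_tendsto_exp (c : ℝ) (hc : 0 < c) :
    Tendsto (fun y : ℝ => -(exp (-(c*y)) / c)) atTop (𝓝 0) := by
  have hmul : Tendsto (fun y : ℝ => c * y) atTop atTop := tendsto_id.const_mul_atTop hc
  have hneg : Tendsto (fun y : ℝ => -(c*y)) atTop atBot := tendsto_neg_atTop_atBot.comp hmul
  have h1 : Tendsto (fun y : ℝ => exp (-(c*y))) atTop (𝓝 0) := tendsto_exp_atBot.comp hneg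
  simpa using (h1.div_const c).neg

lemma aux_tendsto_xexp (c : ℝ) (hc : 0 < c) :
    Tendsto (fun y : ℝ => -((c*y+1)/c^2 * exp (-(c*y)))) atTop (𝓝 0) := by
  have h1 : Tendsto (fun u : ℝ => (u+1) * exp (-u)) atTop (𝓝 0) := by
    have ha := tendsto_pow_mul_exp_neg_atTop_nhds_zero 1
    have hb : Tendsto (fun u : ℝ => exp (-u)) atTop (𝓝 0) := tendsto_exp_neg_atTop_nhds_zero
    simpa [add_mul, pow_one] using ha.add hb
  have hmul : Tendsto (fun y : ℝ => c * y) atTop atTop := tendsto_id.const_mul_atTop hc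
  have h3 := ((h1.comp hmul).div_const (c^2)).neg
  simp only [Function.comp] at h3
  convert h3 using 2 with y
  · ring
  · norm_num

lemma aux_integrableOn_exp (c a : ℝ) (hc : 0 < c) :
    IntegrableOn (fun x : ℝ => exp (-(c*x))) (Ioi a) := by
  simpa [neg_mul] using exp_neg_integrableOn_Ioi a hc

lemma aux_integral_exp_Ioi (c a : ℝ) (hc : 0 < c) :
    ∫ x in Ioi a, exp (-(c*x)) = exp (-(c*a)) / c := by
  have := integral_Ioi_of_hasDerivAt_of_tendsto'
    (f := fun y : ℝ => -(exp (-(c*y)) / c)) (f' := fun y : ℝ => exp (-(c*y)))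
    (fun y _ => aux_hasDerivAt_exp c y hc.ne') (aux_integrableOn_exp c a hc)
    (aux_tendsto_exp c hc)
  rw [this]; ring

lemma aux_integrableOn_xexp (c a : ℝ) (hc : 0 < c) (ha : 0 ≤ a) :
    IntegrableOn (fun x : ℝ => x * exp (-(c*x))) (Ioi a) :=
  integrableOn_Ioi_deriv_of_nonneg'
    (g := fun y : ℝ => -((c*y+1)/c^2 * exp (-(c*y))))
    (fun y _ => aux_hasDerivAt_xexp c y hc.ne')
    (fun y hy => mul_nonneg (le_trans ha (le_of_lt hy)) (exp_pos _).le)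
    (aux_tendsto_xexp c hc)

lemma aux_integral_xexp_Ioi (c a : ℝ) (hc : 0 < c) (ha : 0 ≤ a) :
    ∫ x in Ioi a, x * exp (-(c*x)) = (c*a+1)/c^2 * exp (-(c*a)) := by
  have := integral_Ioi_of_hasDerivAt_of_nonneg'
    (g := fun y : ℝ => -((c*y+1)/c^2 * exp (-(c*y)))) (g' := fun y : ℝ => y * exp (-(c*y)))
    (fun y _ => aux_hasDerivAt_xexp c y hc.ne')
    (fun y hy => mul_nonneg (le_trans ha (le_of_lt hy)) (exp_pos _).le)
    (aux_tendsto_xexp c hc)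
  rw [this]; ring

lemma aux_integral_exp_Ioc (a d : ℝ) (had : a ≤ d) :
    ∫ y in Ioc a d, exp (-y) = exp (-a) - exp (-d) := by
  rw [← intervalIntegral.integral_of_le had]
  have := intervalIntegral.integral_eq_sub_of_hasDerivAt
    (f := fun y : ℝ => -(exp (-(1*y)) / 1)) (f' := fun y : ℝ => exp (-(1*y)))
    (a := a) (b := d) (fun y _ => aux_hasDerivAt_exp 1 y one_ne_zero)
    ((by fun_prop : Continuous fun y : ℝ => rexp (-(1*y))).intervalIntegrable a d)
  simp only [one_mul, neg_mul] at this ⊢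
  rw [show (fun y : ℝ => rexp (-y)) = fun y : ℝ => rexp (-y) from rfl]
  rw [this]
  simp
  ring

lemma aux_integral_xexp_Ioc (a d : ℝ) (had : a ≤ d) :
    ∫ y in Ioc a d, y * exp (-y) = (a+1) * exp (-a) - (d+1) * exp (-d) := by
  rw [← intervalIntegral.integral_of_le had]
  have := intervalIntegral.integral_eq_sub_of_hasDerivAt
    (f := fun y : ℝ => -((1*y+1)/1^2 * exp (-(1*y)))) (f' := fun y : ℝ => y * exp (-(1*y)))
    (a := a) (b := d) (fun y _ => aux_hasDerivAt_xexp 1 y one_ne_zero)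
    ((by fun_prop : Continuous fun y : ℝ => y * rexp (-(1*y))).intervalIntegrable a d)
  simp only [one_mul, one_pow, neg_mul] at this ⊢
  rw [this]
  ring



lemma expMeasure_one_eq : expMeasure 1 = volume.withDensity (exponentialPDF 1) := rfl

lemma measurable_exponentialPDF : Measurable (exponentialPDF 1) :=
  ENNReal.measurable_ofReal.comp (measurable_exponentialPDFReal 1)

lemma density_eq {x : ℝ} (hx : 0 ≤ x) : exponentialPDF 1 x = ENNReal.ofReal (exp (-x)) := by
  rw [exponentialPDF_of_nonneg hx]; norm_num

lemma meas_Ioc {a d : ℝ} (ha : 0 ≤ a) (had : a ≤ d) :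
    expMeasure 1 (Ioc a d) = ENNReal.ofReal (exp (-a) - exp (-d)) := by
  rw [expMeasure_one_eq, withDensity_apply _ measurableSet_Ioc,
    setLIntegral_congr_fun measurableSet_Ioc
      (fun y hy => density_eq (le_trans ha hy.1.le)),
    ← ofReal_integral_eq_lintegral_ofReal
      ((Continuous.integrableOn_Ioc (by fun_prop)))
      (Filter.Eventually.of_forall fun y => (exp_pos _).le),
    aux_integral_exp_Ioc a d had]

lemma meas_Ioi {a : ℝ} (ha : 0 ≤ a) :
    expMeasure 1 (Ioi a) = ENNReal.ofReal (exp (-a)) := by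
  rw [expMeasure_one_eq, withDensity_apply _ measurableSet_Ioi,
    setLIntegral_congr_fun measurableSet_Ioi
      (fun y hy => density_eq (le_trans ha (le_of_lt hy))),
    ← ofReal_integral_eq_lintegral_ofReal
      (by simpa [neg_mul, IntegrableOn] using aux_integrableOn_exp 1 a one_pos)
      (Filter.Eventually.of_forall fun y => (exp_pos _).le)]
  have := aux_integral_exp_Ioi 1 a one_pos
  simp only [one_mul] at this
  rw [this]; simp

lemma mom_Ioc {a d : ℝ} (ha : 0 ≤ a) (had : a ≤ d) :
    ∫⁻ y in Ioc a d, ENNReal.ofReal y ∂(expMeasure 1)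
      = ENNReal.ofReal ((a+1) * exp (-a) - (d+1) * exp (-d)) := by
  rw [expMeasure_one_eq, restrict_withDensity measurableSet_Ioc,
    lintegral_withDensity_eq_lintegral_mul _ measurable_exponentialPDF
      ENNReal.measurable_ofReal,
    setLIntegral_congr_fun (g := fun y => ENNReal.ofReal (y * exp (-y))) measurableSet_Ioc
      (fun y hy => by
        rw [Pi.mul_apply, density_eq (le_trans ha hy.1.le),
          ← ENNReal.ofReal_mul (exp_pos (-y)).le, mul_comm]),
    ← ofReal_integral_eq_lintegral_ofReal
      ((Continuous.integrableOn_Ioc (by fun_prop)))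
      (ae_restrict_of_forall_mem measurableSet_Ioc fun y hy =>
        mul_nonneg (le_trans ha hy.1.le) (exp_pos _).le),
    aux_integral_xexp_Ioc a d had]

lemma mom_Ioi {a : ℝ} (ha : 0 ≤ a) :
    ∫⁻ y in Ioi a, ENNReal.ofReal y ∂(expMeasure 1)
      = ENNReal.ofReal ((a+1) * exp (-a)) := by
  rw [expMeasure_one_eq, restrict_withDensity measurableSet_Ioi,
    lintegral_withDensity_eq_lintegral_mul _ measurable_exponentialPDF
      ENNReal.measurable_ofReal,
    setLIntegral_congr_fun (g := fun y => ENNReal.ofReal (y * exp (-y))) measurableSet_Ioi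
      (fun y hy => by
        rw [Pi.mul_apply, density_eq (le_trans ha (le_of_lt hy)),
          ← ENNReal.ofReal_mul (exp_pos (-y)).le, mul_comm]),
    ← ofReal_integral_eq_lintegral_ofReal
      (by simpa [neg_mul, IntegrableOn] using aux_integrableOn_xexp 1 a one_pos ha)
      (ae_restrict_of_forall_mem measurableSet_Ioi fun y hy =>
        mul_nonneg (le_trans ha (le_of_lt hy)) (exp_pos _).le)]
  have := aux_integral_xexp_Ioi 1 a one_pos ha
  simp only [one_mul, one_pow, div_one] at this
  rw [this]

lemma aux_xexp_anti {a d : ℝ} (ha : 0 ≤ a) (had : a ≤ d) :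
    (d+1) * exp (-d) ≤ (a+1) * exp (-a) := by
  have h1 : (d - a) + 1 ≤ exp (d - a) := Real.add_one_le_exp _
  have h2 : exp (-a) = exp (d - a) * exp (-d) := by rw [← Real.exp_add]; ring_nf
  calc (d+1) * exp (-d) ≤ ((a+1)*(d-a+1)) * exp (-d) := by
        nlinarith [exp_pos (-d), mul_nonneg ha (sub_nonneg.mpr had)]
    _ ≤ ((a+1) * exp (d-a)) * exp (-d) := by
        have h3 := mul_le_mul_of_nonneg_left h1 (show (0:ℝ) ≤ a+1 by linarith)
        exact mul_le_mul_of_nonneg_right h3 (exp_pos _).le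
    _ = (a+1) * exp (-a) := by rw [h2]; ring



lemma exp_mul_exp (s x : ℝ) : exp (-x) * exp (-(s*x)) = exp (-((1+s)*x)) := by
  rw [← Real.exp_add]; congr 1; ring

lemma outer_eval (g : ℝ → ℝ≥0∞) (hg : Measurable g) (h0 : ∀ x ≤ (0:ℝ), g x = 0)
    (F : ℝ → ℝ) (hF : ∀ x ∈ Ioi (0:ℝ), g x = ENNReal.ofReal (F x))
    (hFi : IntegrableOn (fun x => exp (-x) * F x) (Ioi 0))
    (hFnn : ∀ x ∈ Ioi (0:ℝ), 0 ≤ F x) :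
    ∫⁻ x, g x ∂(expMeasure 1) = ENNReal.ofReal (∫ x in Ioi 0, exp (-x) * F x) := by
  rw [expMeasure_one_eq,
    lintegral_withDensity_eq_lintegral_mul _ measurable_exponentialPDF hg,
    ← lintegral_add_compl (exponentialPDF 1 * g) (measurableSet_Ioi (a := (0:ℝ)))]
  have hIic : ∫⁻ x in (Ioi (0:ℝ))ᶜ, (exponentialPDF 1 * g) x = 0 := by
    rw [compl_Ioi,
      setLIntegral_congr_fun (g := fun _ => (0:ℝ≥0∞)) measurableSet_Iic
        (fun x hx => by rw [Pi.mul_apply, h0 x hx, mul_zero]),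
      lintegral_zero]
  rw [hIic, add_zero,
    setLIntegral_congr_fun (g := fun x => ENNReal.ofReal (exp (-x) * F x)) measurableSet_Ioi
      (fun x hx => by
        rw [Pi.mul_apply, density_eq (le_of_lt hx), hF x hx,
          ← ENNReal.ofReal_mul (exp_pos _).le]),
    ← ofReal_integral_eq_lintegral_ofReal hFi
      (ae_restrict_of_forall_mem measurableSet_Ioi fun x hx =>
        mul_nonneg (exp_pos _).le (hFnn x hx))]

lemma real_intble_P (s : ℝ) (hs : 0 ≤ s) :
    IntegrableOn (fun x => exp (-x) * exp (-(s*x))) (Ioi (0:ℝ)) := by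
  have h : (fun x : ℝ => exp (-x) * exp (-(s*x))) = fun x => exp (-((1+s)*x)) :=
    funext fun x => exp_mul_exp s x
  rw [h]; exact aux_integrableOn_exp _ _ (by linarith)

lemma real_int_P (s : ℝ) (hs : 0 ≤ s) :
    ∫ x in Ioi (0:ℝ), exp (-x) * exp (-(s*x)) = 1/(1+s) := by
  simp only [exp_mul_exp s]
  rw [aux_integral_exp_Ioi (1+s) 0 (by linarith)]
  simp

lemma real_intble_M (s : ℝ) (hs : 0 ≤ s) :
    IntegrableOn (fun x => exp (-x) * ((s*x+1) * exp (-(s*x)))) (Ioi (0:ℝ)) := by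
  have h : (fun x : ℝ => exp (-x) * ((s*x+1) * exp (-(s*x))))
      = fun x => s * (x * exp (-((1+s)*x))) + exp (-((1+s)*x)) := funext fun x => by
    rw [← exp_mul_exp s x]; ring
  rw [h]
  exact (((aux_integrableOn_xexp (1+s) 0 (by linarith) le_rfl).const_mul s)).add
    (aux_integrableOn_exp _ _ (by linarith))

lemma real_int_M (s : ℝ) (hs : 0 ≤ s) :
    ∫ x in Ioi (0:ℝ), exp (-x) * ((s*x+1) * exp (-(s*x))) = s/(1+s)^2 + 1/(1+s) := by
  have h1s : (0:ℝ) < 1 + s := by linarith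
  have h : ∀ x ∈ Ioi (0:ℝ), exp (-x) * ((s*x+1) * exp (-(s*x)))
      = s * (x * exp (-((1+s)*x))) + exp (-((1+s)*x)) := fun x _ => by
    rw [← exp_mul_exp s x]; ring
  rw [setIntegral_congr_fun measurableSet_Ioi h,
    integral_add ((aux_integrableOn_xexp (1+s) 0 h1s le_rfl).const_mul s)
      (aux_integrableOn_exp _ _ h1s),
    integral_const_mul, aux_integral_xexp_Ioi (1+s) 0 h1s le_rfl,
    aux_integral_exp_Ioi (1+s) 0 h1s]
  simp only [mul_zero, neg_zero, Real.exp_zero, mul_one]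
  field_simp
  ring


/-- For `ζ, ξ` i.i.d. exponential of mean 1, `0 ≤ s < t ≤ ∞`, the event
`{s < ξ/ζ ≤ t}` has probability `p = 1/(1+s) - 1/(1+t)`, and the conditional
expectation of `ξ` given this event is `((t/(1+t))² - (s/(1+s))²)/p`
(with `1/(1+t) = 0` and `t/(1+t) = 1` when `t = ∞`). -/
theorem conditional_expectation_slope_event (s : ℝ) (t : ℝ≥0∞) (hs : 0 ≤ s)
    (hst : ENNReal.ofReal s < t) :
    ((expMeasure 1).prod (expMeasure 1))
        {p : ℝ × ℝ | 0 < p.1 ∧ s < p.2 / p.1 ∧ ENNReal.ofReal (p.2 / p.1) ≤ t} =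
      ENNReal.ofReal (1 / (1 + s) - ((1 + t)⁻¹).toReal) ∧
    (∫ p in {p : ℝ × ℝ | 0 < p.1 ∧ s < p.2 / p.1 ∧ ENNReal.ofReal (p.2 / p.1) ≤ t},
          p.2 ∂(expMeasure 1).prod (expMeasure 1)) /
        (1 / (1 + s) - ((1 + t)⁻¹).toReal) =
      ((1 - ((1 + t)⁻¹).toReal) ^ 2 - (s / (1 + s)) ^ 2) /
        (1 / (1 + s) - ((1 + t)⁻¹).toReal) := by
  haveI : IsProbabilityMeasure (expMeasure 1) := isProbabilityMeasure_expMeasure one_pos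
  set S : Set (ℝ × ℝ) :=
    {p : ℝ × ℝ | 0 < p.1 ∧ s < p.2 / p.1 ∧ ENNReal.ofReal (p.2 / p.1) ≤ t} with hSdef
  have h1s : (0:ℝ) < 1 + s := by linarith
  have hS : MeasurableSet S := by
    have h1 : MeasurableSet {p : ℝ × ℝ | 0 < p.1} :=
      measurableSet_lt measurable_const measurable_fst
    have h2 : MeasurableSet {p : ℝ × ℝ | s < p.2 / p.1} :=
      measurableSet_lt measurable_const (measurable_snd.div measurable_fst)
    have h3 : MeasurableSet {p : ℝ × ℝ | ENNReal.ofReal (p.2 / p.1) ≤ t} :=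
      measurableSet_le (ENNReal.measurable_ofReal.comp (measurable_snd.div measurable_fst))
        measurable_const
    exact h1.inter (h2.inter h3)
  have hslice0 : ∀ x : ℝ, x ≤ 0 → Prod.mk x ⁻¹' S = ∅ := by
    intro x hx
    ext y
    simp only [hSdef, mem_preimage, mem_setOf_eq, mem_empty_iff_false, iff_false, not_and]
    intro h
    exact absurd h (not_lt.mpr hx)
  have hg1 : Measurable fun x => expMeasure 1 (Prod.mk x ⁻¹' S) :=
    measurable_measure_prodMk_left hS
  have hf2 : Measurable (S.indicator (fun p : ℝ × ℝ => ENNReal.ofReal p.2)) :=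
    (ENNReal.measurable_ofReal.comp measurable_snd).indicator hS
  have hinner : ∀ x : ℝ,
      (∫⁻ y, S.indicator (fun p : ℝ × ℝ => ENNReal.ofReal p.2) (x, y) ∂(expMeasure 1))
        = ∫⁻ y in Prod.mk x ⁻¹' S, ENNReal.ofReal y ∂(expMeasure 1) := by
    intro x
    rw [← lintegral_indicator (hS.preimage measurable_prodMk_left) _]
    exact lintegral_congr fun y => by
      by_cases h : (x, y) ∈ S <;>
        simp [Set.indicator_apply, Set.mem_preimage, h]
  have hg2 : Measurable fun x =>
      ∫⁻ y in Prod.mk x ⁻¹' S, ENNReal.ofReal y ∂(expMeasure 1) := by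
    have h := hf2.lintegral_prod_right' (ν := expMeasure 1)
    exact (funext hinner : _) ▸ h
  have hfubini : ∫⁻ p in S, ENNReal.ofReal p.2 ∂((expMeasure 1).prod (expMeasure 1))
      = ∫⁻ x, (∫⁻ y in Prod.mk x ⁻¹' S, ENNReal.ofReal y ∂(expMeasure 1)) ∂(expMeasure 1) := by
    rw [← lintegral_indicator hS _, lintegral_prod _ hf2.aemeasurable]
    exact lintegral_congr fun x => hinner x
  have hnn : ∀ p : ℝ × ℝ, p ∈ S → 0 ≤ p.2 := by
    rintro p ⟨hp1, hp2, -⟩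
    have := (lt_div_iff₀ hp1).mp hp2
    have := mul_nonneg hs hp1.le
    linarith
  have hBochner : (∫ p in S, p.2 ∂((expMeasure 1).prod (expMeasure 1)))
      = (∫⁻ p in S, ENNReal.ofReal p.2 ∂((expMeasure 1).prod (expMeasure 1))).toReal := by
    rw [integral_eq_lintegral_of_nonneg_ae
      (ae_restrict_of_forall_mem hS hnn)
      (measurable_snd.aestronglyMeasurable)]
  rcases eq_or_ne t ⊤ with rfl | ht
  · -- t = ∞
    have htr : ((1 + (⊤:ℝ≥0∞))⁻¹).toReal = 0 := by simp
    have hslice : ∀ x : ℝ, 0 < x → Prod.mk x ⁻¹' S = Ioi (s*x) := by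
      intro x hx
      ext y
      simp only [hSdef, mem_preimage, mem_setOf_eq, mem_Ioi, le_top, and_true, hx, true_and]
      exact lt_div_iff₀ hx
    have hP : ((expMeasure 1).prod (expMeasure 1)) S
        = ENNReal.ofReal (∫ x in Ioi 0, exp (-x) * exp (-(s*x))) := by
      rw [Measure.prod_apply hS]
      exact outer_eval _ hg1
        (fun x hx => by rw [hslice0 x hx, measure_empty])
        (fun x => exp (-(s*x)))
        (fun x hx => by rw [hslice x hx, meas_Ioi (mul_nonneg hs hx.le)])
        (real_intble_P s hs)
        (fun x _ => (exp_pos _).le)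
    have hM : (∫⁻ p in S, ENNReal.ofReal p.2 ∂((expMeasure 1).prod (expMeasure 1)))
        = ENNReal.ofReal (∫ x in Ioi 0, exp (-x) * ((s*x+1) * exp (-(s*x)))) := by
      rw [hfubini]
      exact outer_eval _ hg2
        (fun x hx => by rw [hslice0 x hx]; simp)
        (fun x => (s*x+1) * exp (-(s*x)))
        (fun x hx => by rw [hslice x hx, mom_Ioi (mul_nonneg hs hx.le)])
        (real_intble_M s hs)
        (fun x hx => mul_nonneg (by nlinarith [mul_nonneg hs hx.le]) (exp_pos _).le)
    constructor
    · rw [hP, real_int_P s hs, htr, sub_zero]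
    · rw [hBochner, hM, ENNReal.toReal_ofReal
        (setIntegral_nonneg measurableSet_Ioi fun x hx =>
          mul_nonneg (exp_pos _).le
            (mul_nonneg (by nlinarith [mul_nonneg hs hx.le]) (exp_pos _).le)),
        real_int_M s hs, htr]
      congr 1
      field_simp
      ring
  · -- t finite
    set b : ℝ := t.toReal with hbdef
    have hsb : s < b := by
      rw [hbdef]
      exact (ENNReal.ofReal_lt_iff_lt_toReal hs ht).mp hst
    have hb0 : (0:ℝ) ≤ b := ENNReal.toReal_nonneg
    have h1b : (0:ℝ) < 1 + b := by linarith
    have htb : t = ENNReal.ofReal b := (ENNReal.ofReal_toReal ht).symm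
    have htr : ((1 + t)⁻¹).toReal = 1/(1+b) := by
      rw [htb, show (1:ℝ≥0∞) + ENNReal.ofReal b = ENNReal.ofReal (1+b) by
        rw [← ENNReal.ofReal_one, ← ENNReal.ofReal_add zero_le_one hb0],
        ← ENNReal.ofReal_toReal (a := (ENNReal.ofReal (1+b))⁻¹) (by simp [h1b.le]; positivity)]
      rw [ENNReal.toReal_ofReal ENNReal.toReal_nonneg, ENNReal.toReal_inv,
        ENNReal.toReal_ofReal h1b.le, one_div]
    have hslice : ∀ x : ℝ, 0 < x → Prod.mk x ⁻¹' S = Ioc (s*x) (b*x) := by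
      intro x hx
      ext y
      simp only [hSdef, mem_preimage, mem_setOf_eq, mem_Ioc, hx, true_and]
      constructor
      · rintro ⟨hy1, hy2⟩
        refine ⟨(lt_div_iff₀ hx).mp hy1, ?_⟩
        rw [htb] at hy2
        exact (div_le_iff₀ hx).mp ((ENNReal.ofReal_le_ofReal_iff hb0).mp hy2)
      · rintro ⟨hy1, hy2⟩
        refine ⟨(lt_div_iff₀ hx).mpr hy1, ?_⟩
        rw [htb]
        exact ENNReal.ofReal_le_ofReal ((div_le_iff₀ hx).mpr hy2)
    have hPint : IntegrableOn
        (fun x => exp (-x) * (exp (-(s*x)) - exp (-(b*x)))) (Ioi (0:ℝ)) := by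
      have h : (fun x : ℝ => exp (-x) * (exp (-(s*x)) - exp (-(b*x))))
          = fun x => exp (-x) * exp (-(s*x)) - exp (-x) * exp (-(b*x)) :=
        funext fun x => by ring
      rw [h]
      exact (real_intble_P s hs).sub (real_intble_P b hb0)
    have hP : ((expMeasure 1).prod (expMeasure 1)) S
        = ENNReal.ofReal (∫ x in Ioi 0, exp (-x) * (exp (-(s*x)) - exp (-(b*x)))) := by
      rw [Measure.prod_apply hS]
      exact outer_eval _ hg1
        (fun x hx => by rw [hslice0 x hx, measure_empty])
        (fun x => exp (-(s*x)) - exp (-(b*x)))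
        (fun x hx => by
          rw [hslice x hx, meas_Ioc (mul_nonneg hs hx.le)
            (mul_le_mul_of_nonneg_right hsb.le hx.le)])
        hPint
        (fun x hx => sub_nonneg.mpr (exp_le_exp.mpr (by simp only [Set.mem_Ioi] at hx; nlinarith)))
    have hPval : ∫ x in Ioi (0:ℝ), exp (-x) * (exp (-(s*x)) - exp (-(b*x)))
        = 1/(1+s) - 1/(1+b) := by
      have h : ∀ x ∈ Ioi (0:ℝ), exp (-x) * (exp (-(s*x)) - exp (-(b*x)))
          = exp (-x) * exp (-(s*x)) - exp (-x) * exp (-(b*x)) := fun x _ => by ring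
      rw [setIntegral_congr_fun measurableSet_Ioi h,
        integral_sub (real_intble_P s hs) (real_intble_P b hb0),
        real_int_P s hs, real_int_P b hb0]
    have hMint : IntegrableOn
        (fun x => exp (-x) * ((s*x+1) * exp (-(s*x)) - (b*x+1) * exp (-(b*x)))) (Ioi (0:ℝ)) := by
      have h : (fun x : ℝ => exp (-x) * ((s*x+1) * exp (-(s*x)) - (b*x+1) * exp (-(b*x))))
          = fun x => exp (-x) * ((s*x+1) * exp (-(s*x))) - exp (-x) * ((b*x+1) * exp (-(b*x))) :=
        funext fun x => by ring
      rw [h]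
      exact (real_intble_M s hs).sub (real_intble_M b hb0)
    have hM : (∫⁻ p in S, ENNReal.ofReal p.2 ∂((expMeasure 1).prod (expMeasure 1)))
        = ENNReal.ofReal (∫ x in Ioi 0,
            exp (-x) * ((s*x+1) * exp (-(s*x)) - (b*x+1) * exp (-(b*x)))) := by
      rw [hfubini]
      exact outer_eval _ hg2
        (fun x hx => by rw [hslice0 x hx]; simp)
        (fun x => (s*x+1) * exp (-(s*x)) - (b*x+1) * exp (-(b*x)))
        (fun x hx => by
          rw [hslice x hx, mom_Ioc (mul_nonneg hs hx.le)
            (mul_le_mul_of_nonneg_right hsb.le hx.le)])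
        hMint
        (fun x hx => sub_nonneg.mpr (aux_xexp_anti (mul_nonneg hs hx.le)
          (mul_le_mul_of_nonneg_right hsb.le hx.le)))
    have hMval : ∫ x in Ioi (0:ℝ),
        exp (-x) * ((s*x+1) * exp (-(s*x)) - (b*x+1) * exp (-(b*x)))
        = (s/(1+s)^2 + 1/(1+s)) - (b/(1+b)^2 + 1/(1+b)) := by
      have h : ∀ x ∈ Ioi (0:ℝ), exp (-x) * ((s*x+1) * exp (-(s*x)) - (b*x+1) * exp (-(b*x)))
          = exp (-x) * ((s*x+1) * exp (-(s*x))) - exp (-x) * ((b*x+1) * exp (-(b*x))) :=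
        fun x _ => by ring
      rw [setIntegral_congr_fun measurableSet_Ioi h,
        integral_sub (real_intble_M s hs) (real_intble_M b hb0),
        real_int_M s hs, real_int_M b hb0]
    constructor
    · rw [hP, hPval, htr]
    · rw [hBochner, hM, ENNReal.toReal_ofReal
        (setIntegral_nonneg measurableSet_Ioi fun x hx =>
          mul_nonneg (exp_pos _).le (sub_nonneg.mpr (aux_xexp_anti (mul_nonneg hs hx.le)
            (mul_le_mul_of_nonneg_right hsb.le hx.le)))),
        hMval, htr]
      congr 1
      field_simp
      ring
end
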